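/- arXiv:1111.5635 — 7 statements merged into one kernel-verified Lean document; each statement's English description precedes it below -/
import Mathlib

section
/- If G is a group such that every proper normal subgroup of G has index strictly greater than ℵ₀, then G is perfect, i.e. equal to its commutator subgroup. -/
/-- If every proper normal subgroup of `G` has index strictly greater than `ℵ₀`,
then `G` is perfect. -/
theorem stmt_2 {G : Type*} [Group G]
    (h : ∀ N : Subgroup G, N.Normal → N ≠ ⊤ → Cardinal.aleph0 < Cardinal.mk (G ⧸ N)) :
    commutator G = ⊤ := by
  by_contra hc
  obtain ⟨g, hg⟩ : ∃ g : G, g ∉ commutator G := by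
    by_contra hall
    push_neg at hall
    exact hc ((Subgroup.eq_top_iff' _).2 hall)
  have hg1 : Abelianization.of g ≠ 1 := by
    intro h1
    exact hg ((QuotientGroup.eq_one_iff g).mp h1)
  have hg0 : (Additive.ofMul (Abelianization.of g) : Additive (Abelianization G)) ≠ 0 := hg1
  obtain ⟨c, hcne⟩ := CharacterModule.exists_character_apply_ne_zero_of_ne_zero hg0
  let φ : G →* Multiplicative (AddCircle (1 : ℚ)) :=
    (AddMonoidHom.toMultiplicativeRight c).comp Abelianization.of
  have hgN : g ∉ φ.ker := fun hk => hcne hk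
  have hNtop : φ.ker ≠ ⊤ := fun ht => hgN (ht ▸ Subgroup.mem_top g)
  have hlt := h φ.ker (MonoidHom.normal_ker φ) hNtop
  have h1 : Countable (Multiplicative (AddCircle (1 : ℚ))) :=
    Quotient.countable (α := ℚ)
  have h2 : Countable φ.range := Subtype.countable
  have : Countable (G ⧸ φ.ker) :=
    (QuotientGroup.quotientKerEquivRange φ).toEquiv.countable_iff.mpr inferInstance
  exact absurd hlt (not_lt.2 (Cardinal.mk_le_aleph0))
end

section
/- Let V be a vector space over a division ring with basis B, and let D ⊆ B with the cardinality of D strictly less than the (infinite) dimension of V. Then for every linear automorphism σ of V there is a subset C of B with B \ C a moiety of B, and a linear automorphism ρ of V such that ρ fixes span(B \ C') pointwise for some moiety decomposition, ρ preserves a complementary span, and ρ agrees with σ on D. -/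
open Set Submodule Cardinal

/-- For a vector space `V` over a division ring with basis `b` indexed by an infinite set `ι`,
and `D ⊆ ι` of cardinality `< |ι|`, every automorphism `σ` of `V` agrees on `D` with some
`B`-moietous automorphism `ρ` (one fixing pointwise one half `B₁` of a moiety partition of the
basis and preserving the span of the other half). -/
theorem stmt_5 {K V ι : Type*} [DivisionRing K] [AddCommGroup V] [Module K V]
    (b : Module.Basis ι K V) (hinf : Cardinal.aleph0 ≤ Cardinal.mk ι)
    (D : Set ι) (hD : Cardinal.mk D < Cardinal.mk ι) (σ : V ≃ₗ[K] V) :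
    ∃ (B₁ : Set ι) (ρ : V ≃ₗ[K] V),
      Cardinal.mk B₁ = Cardinal.mk ↥(B₁ᶜ) ∧
      (∀ i ∈ B₁, ρ (b i) = b i) ∧
      (Submodule.span K (b '' B₁ᶜ)).map (ρ : V →ₗ[K] V) = Submodule.span K (b '' B₁ᶜ) ∧
      ∀ i ∈ D, ρ (b i) = σ (b i) := by
  classical
  haveI : Infinite ι := Cardinal.infinite_iff.mpr hinf
  -- the set of "relevant" indices
  set S : Set ι := D ∪ ⋃ d ∈ D, ((b.repr (σ (b d))).support : Set ι) with hSdef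
  have hS : #S < #ι := by
    rcases lt_or_ge (#D) ℵ₀ with hfin | hinfD
    · have hDfin : D.Finite := by
        rwa [Cardinal.lt_aleph0_iff_set_finite] at hfin
      have hSfin : S.Finite :=
        hDfin.union (hDfin.biUnion fun d _ => (Finset.finite_toSet _))
      exact lt_of_lt_of_le hSfin.lt_aleph0 hinf
    · haveI : Nonempty D := Cardinal.mk_ne_zero_iff.mp
        (fun h => by rw [h] at hinfD; exact (Cardinal.aleph0_pos.not_ge hinfD))
      have h1 : #(⋃ d ∈ D, ((b.repr (σ (b d))).support : Set ι)) ≤ #D * ℵ₀ := by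
        refine le_trans (Cardinal.mk_biUnion_le _ _) ?_
        refine mul_le_mul_right ?_ _
        exact ciSup_le' fun d => Cardinal.mk_le_aleph0
      have h2 : #D * ℵ₀ = #D := by
        rw [Cardinal.mul_eq_max hinfD le_rfl]
        exact max_eq_left hinfD
      calc #S ≤ #D + #(⋃ d ∈ D, ((b.repr (σ (b d))).support : Set ι)) :=
              Cardinal.mk_union_le _ _
        _ ≤ #D + #D * ℵ₀ := by gcongr
        _ = #D + #D := by rw [h2]
        _ = #D := Cardinal.add_eq_self hinfD
        _ < #ι := hD
  have hSc : #(↥Sᶜ) = #ι := Cardinal.mk_compl_of_infinite S hS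
  have hScinf : ℵ₀ ≤ #(↥Sᶜ) := hSc ▸ hinf
  -- split the complement of S into two halves
  have hsum : #(↥Sᶜ ⊕ ↥Sᶜ) = #(↥Sᶜ) := by
    simp [Cardinal.add_eq_self hScinf]
  obtain ⟨φ⟩ := Cardinal.eq.mp hsum
  have hinj1 : Function.Injective (fun x : ↥Sᶜ => φ (Sum.inl x)) :=
    fun a c h => Sum.inl_injective (φ.injective h)
  have hinj2 : Function.Injective (fun x : ↥Sᶜ => φ (Sum.inr x)) :=
    fun a c h => Sum.inr_injective (φ.injective h)
  set B₁ : Set ι := Subtype.val '' (Set.range fun x : ↥Sᶜ => φ (Sum.inl x)) with hB₁def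
  have hB₁sub : B₁ ⊆ Sᶜ := by
    rintro x ⟨y, -, rfl⟩; exact y.2
  have hmkB₁ : #B₁ = #ι := by
    rw [hB₁def, Cardinal.mk_image_eq Subtype.val_injective,
      Cardinal.mk_range_eq _ hinj1, hSc]
  have hDc : D ⊆ S := Set.subset_union_left
  have hDB₂ : D ⊆ B₁ᶜ := fun x hx hxB₁ => (hB₁sub hxB₁) (hDc hx)
  have hSB₂ : S ⊆ B₁ᶜ := fun x hx hxB₁ => (hB₁sub hxB₁) hx
  have hmkB₂ : #(↥B₁ᶜ) = #ι := by
    apply le_antisymm (Cardinal.mk_set_le _)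
    have hsub : Subtype.val '' (Set.range fun x : ↥Sᶜ => φ (Sum.inr x)) ⊆ B₁ᶜ := by
      rintro x ⟨y, ⟨z, rfl⟩, rfl⟩ hmem
      obtain ⟨y', ⟨w, rfl⟩, hval⟩ := hmem
      have h2 := φ.injective (Subtype.val_injective hval)
      simp at h2
    calc #ι = #(Subtype.val '' (Set.range fun x : ↥Sᶜ => φ (Sum.inr x))) := by
            rw [Cardinal.mk_image_eq Subtype.val_injective,
              Cardinal.mk_range_eq _ hinj2, hSc]
      _ ≤ #(↥B₁ᶜ) := Cardinal.mk_le_mk_of_subset hsub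
  -- linear independence of the relevant sets
  have hliB₁fam : LinearIndependent K (fun x : ↥B₁ => b x) :=
    b.linearIndependent.comp _ Subtype.val_injective
  have hliB₁ : LinearIndependent K ((↑) : ↥(b '' B₁) → V) := LinearIndepOn.id_image hliB₁fam
  have hliB₂fam : LinearIndependent K (fun x : ↥(B₁ᶜ) => b x) :=
    b.linearIndependent.comp _ Subtype.val_injective
  have hliB₂ : LinearIndependent K ((↑) : ↥(b '' B₁ᶜ) → V) := LinearIndepOn.id_image hliB₂fam
  set g : ι → V := fun i => σ (b i) with hgdef
  have hginj : Function.Injective g := fun a c h => b.injective (σ.injective h)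
  set T : Set V := g '' D with hTdef
  have hliT : LinearIndependent K ((↑) : ↥T → V) := by
    have h1 : LinearIndependent K (fun x : ↥D => g x) :=
      (b.linearIndependent.comp _ Subtype.val_injective).map' σ.toLinearMap σ.ker
    exact LinearIndepOn.id_image h1
  set W₂ : Submodule K V := Submodule.span K (b '' B₁ᶜ) with hW₂def
  have hTW₂ : T ⊆ ↑W₂ := by
    rintro x ⟨d, hd, rfl⟩
    refine Submodule.span_mono (Set.image_mono (f := b) ?_) (b.mem_span_repr_support (σ (b d)))
    intro j hj
    exact hSB₂ (Set.mem_union_right _ (Set.mem_biUnion hd hj))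
  have hdisj : Disjoint (Submodule.span K (b '' B₁)) W₂ :=
    b.linearIndependent.disjoint_span_image disjoint_compl_right
  have hliST : LinearIndependent K ((↑) : ↥(b '' B₁ ∪ T) → V) :=
    LinearIndepOn.id_union hliB₁ hliT (hdisj.mono_right (Submodule.span_le.mpr hTW₂))
  have hst : b '' B₁ ∪ T ⊆ (b '' B₁ ∪ T) ∪ b '' B₁ᶜ := Set.subset_union_left
  set E : Set V := LinearIndepOn.extend (v := id) hliST hst with hEdef
  have hsE : b '' B₁ ∪ T ⊆ E := LinearIndepOn.subset_extend (v := id) hliST hst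
  have hEt : E ⊆ (b '' B₁ ∪ T) ∪ b '' B₁ᶜ := LinearIndepOn.extend_subset (v := id) hliST hst
  have hliE : LinearIndependent K ((↑) : ↥E → V) := LinearIndepOn.linearIndepOn_extend (v := id) hliST hst
  have hspanE : Submodule.span K E = ⊤ := by
    rw [LinearIndepOn.span_extend_eq_span hliST hst]
    apply eq_top_iff.mpr
    rw [← b.span_eq]
    apply Submodule.span_mono
    rintro x ⟨i, rfl⟩
    by_cases hi : i ∈ B₁
    · exact Or.inl (Or.inl ⟨i, hi, rfl⟩)
    · exact Or.inr ⟨i, hi, rfl⟩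
  set F : Set V := E \ b '' B₁ with hFdef
  have hFW₂ : F ⊆ ↑W₂ := by
    rintro x ⟨hxE, hxB₁⟩
    rcases hEt hxE with (h | h) | h
    · exact absurd h hxB₁
    · exact hTW₂ h
    · exact Submodule.subset_span h
  have hB₁E : b '' B₁ ⊆ E := fun x hx => hsE (Or.inl hx)
  have hTF : T ⊆ F := by
    intro x hx
    refine ⟨hsE (Or.inr hx), fun hmem => ?_⟩
    have h0 : x ∈ Submodule.span K (b '' B₁) := Submodule.subset_span hmem
    have h1 : x ∈ W₂ := hTW₂ hx
    have h2 : x ∈ (⊥ : Submodule K V) := hdisj.le_bot (Submodule.mem_inf.mpr ⟨h0, h1⟩)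
    have hx0 : x = 0 := (Submodule.mem_bot K).mp h2
    obtain ⟨d, hd, rfl⟩ := hx
    exact b.ne_zero d (σ.map_eq_zero_iff.mp hx0)
  have hEunion : E = b '' B₁ ∪ F := (Set.union_diff_cancel hB₁E).symm
  have hspanF : Submodule.span K F = W₂ := by
    apply le_antisymm (Submodule.span_le.mpr hFW₂)
    rw [hW₂def, Submodule.span_le]
    intro x hx
    have hxW₂ : x ∈ W₂ := Submodule.subset_span hx
    have hxE : x ∈ Submodule.span K E := hspanE ▸ Submodule.mem_top
    rw [hEunion, Submodule.span_union] at hxE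
    obtain ⟨u, hu, v, hv, rfl⟩ := Submodule.mem_sup.mp hxE
    have hvW : v ∈ W₂ := Submodule.span_le.mpr hFW₂ hv
    have huW : u ∈ W₂ := by
      have := W₂.sub_mem hxW₂ hvW
      simpa using this
    have hu0 : u = 0 := (Submodule.mem_bot K).mp (hdisj.le_bot (Submodule.mem_inf.mpr ⟨hu, huW⟩))
    simpa [hu0] using hv
  -- cardinalities
  have hrankW₂ : Module.rank K W₂ = #(↥(b '' B₁ᶜ)) := rank_span_set hliB₂
  have hliF : LinearIndependent K ((↑) : ↥F → V) := LinearIndepOn.mono (v := id) hliE Set.diff_subset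
  have hrankF := rank_span_set hliF
  rw [hspanF] at hrankF
  have hmkF : #F = #(↥(b '' B₁ᶜ)) := hrankF.symm.trans hrankW₂
  have hliftF : Cardinal.lift.{u_3} #F = Cardinal.lift.{u_2} #ι := by
    have h1 := Cardinal.mk_image_eq_lift b B₁ᶜ b.injective
    rw [hmkF, h1, hmkB₂]
  have hinfLift : ℵ₀ ≤ Cardinal.lift.{u_2} #ι := Cardinal.aleph0_le_lift.mpr hinf
  have hFT : Cardinal.lift.{u_3} #(↥(F \ T)) = Cardinal.lift.{u_2} #ι := by
    have hsum := Cardinal.mk_diff_add_mk hTF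
    have hle : Cardinal.lift.{u_3} #(↥(F \ T)) ≤ Cardinal.lift.{u_2} #ι := by
      rw [← hliftF]
      exact Cardinal.lift_le.mpr (Cardinal.mk_le_mk_of_subset Set.diff_subset)
    rcases hle.lt_or_eq with hlt | he
    · exfalso
      have hT' : Cardinal.lift.{u_3} #T < Cardinal.lift.{u_2} #ι := by
        have h2 := Cardinal.mk_image_eq_lift g D hginj
        rw [h2]
        exact (Cardinal.lift_lt.mpr hD).trans_le le_rfl
      have h3 : Cardinal.lift.{u_3} #F < Cardinal.lift.{u_2} #ι := by
        rw [← hsum, Cardinal.lift_add]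
        exact Cardinal.add_lt_of_lt hinfLift hlt hT'
      rw [hliftF] at h3
      exact lt_irrefl _ h3
    · exact he
  have hB₂D : #(↥(B₁ᶜ \ D)) = #ι := by
    have hsum := Cardinal.mk_diff_add_mk hDB₂
    have hle : #(↥(B₁ᶜ \ D)) ≤ #ι := Cardinal.mk_set_le _
    rcases hle.lt_or_eq with hlt | he
    · exfalso
      have h3 : #(↥B₁ᶜ) < #ι := by
        rw [← hsum]
        exact Cardinal.add_lt_of_lt hinf hlt hD
      rw [hmkB₂] at h3
      exact lt_irrefl _ h3
    · exact he
  obtain ⟨g₃⟩ : Nonempty (↥(B₁ᶜ \ D) ≃ ↥(F \ T)) := by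
    apply Cardinal.lift_mk_eq'.mp
    rw [hB₂D, hFT]
  -- build the new basis via an explicit bijection
  set g₂ : ↥D ≃ ↥T := Equiv.Set.image g D hginj with hg₂def
  set g₁ : ↥B₁ ≃ ↥(b '' B₁) := Equiv.Set.image b B₁ b.injective with hg₁def
  set eB₂ : ↥(B₁ᶜ) ≃ ↥F :=
    (Equiv.Set.sumDiffSubset hDB₂).symm.trans
      ((g₂.sumCongr g₃).trans (Equiv.Set.sumDiffSubset hTF)) with heB₂def
  set e : ι ≃ ↥E :=
    (Equiv.Set.sumCompl B₁).symm.trans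
      ((g₁.sumCongr eB₂).trans (Equiv.Set.sumDiffSubset hB₁E)) with hedef
  have hc₁ : ∀ i ∈ B₁, ((e i : V)) = b i := by
    intro i hi
    rw [hedef]
    simp only [Equiv.trans_apply, Equiv.Set.sumCompl_symm_apply_of_mem hi,
      Equiv.sumCongr_apply, Sum.map_inl, hg₁def, Equiv.Set.image_apply,
      Equiv.Set.sumDiffSubset_apply_inl hB₁E, Set.coe_inclusion]
  have hc₂ : ∀ i ∈ D, ((e i : V)) = σ (b i) := by
    intro i hi
    have h1 : ∀ (hmem : i ∈ B₁ᶜ),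
        (Equiv.Set.sumDiffSubset hDB₂).symm ⟨i, hmem⟩ = Sum.inl ⟨i, hi⟩ := fun hmem =>
      Equiv.Set.sumDiffSubset_symm_apply_of_mem hDB₂ hi
    rw [hedef]
    simp only [Equiv.trans_apply, Equiv.Set.sumCompl_symm_apply_of_notMem (hDB₂ hi),
      Equiv.sumCongr_apply, Sum.map_inr, heB₂def, Equiv.trans_apply, h1, Sum.map_inl,
      hg₂def, Equiv.Set.image_apply, Equiv.Set.sumDiffSubset_apply_inl hTF,
      Equiv.Set.sumDiffSubset_apply_inr hB₁E, Set.coe_inclusion, hgdef]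
    rfl
  have hc₃ : ∀ i ∈ B₁ᶜ, ((e i : V)) ∈ F := by
    intro i hi
    rw [hedef]
    simp only [Equiv.trans_apply, Equiv.Set.sumCompl_symm_apply_of_notMem hi,
      Equiv.sumCongr_apply, Sum.map_inr, Equiv.Set.sumDiffSubset_apply_inr hB₁E,
      Set.coe_inclusion]
    exact (eB₂ ⟨i, hi⟩).2
  set c : ι → V := fun i => ((e i : V)) with hcdef
  have hcli : LinearIndependent K c := hliE.comp e e.injective
  have hrange : Set.range c = E := by
    rw [hcdef]
    rw [show (fun i => ((e i : V))) = Subtype.val ∘ e from rfl]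
    rw [Set.range_comp, Equiv.range_eq_univ, Set.image_univ, Subtype.range_coe]
  set cb : Module.Basis ι K V := Module.Basis.mk hcli (by rw [hrange, hspanE]) with hcbdef
  set ρ : V ≃ₗ[K] V := b.equiv cb (Equiv.refl ι) with hρdef
  have hρ : ∀ i, ρ (b i) = c i := by
    intro i
    rw [hρdef, Module.Basis.equiv_apply, hcbdef, Equiv.refl_apply, Module.Basis.mk_apply]
  refine ⟨B₁, ρ, hmkB₁.trans hmkB₂.symm, ?_, ?_, ?_⟩
  · intro i hi
    rw [hρ i]
    exact hc₁ i hi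
  · have himage : ⇑ρ '' (b '' B₁ᶜ) = F := by
      apply Set.Subset.antisymm
      · rintro _ ⟨_, ⟨i, hi, rfl⟩, rfl⟩
        show ρ (b i) ∈ F
        rw [hρ i]
        exact hc₃ i hi
      · intro x hx
        set j : ι := e.symm ⟨x, hx.1⟩ with hjdef
        have hcj : c j = x := by
          rw [hcdef]
          simp [hjdef]
        have hjB₂ : j ∈ B₁ᶜ := by
          intro hjB₁
          apply hx.2
          have hxbj : x = b j := by
            rw [← hcj]
            exact hc₁ j hjB₁
          rw [hxbj]
          exact Set.mem_image_of_mem b hjB₁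
        refine ⟨b j, Set.mem_image_of_mem b hjB₂, ?_⟩
        show ρ (b j) = x
        rw [hρ j, hcj]
    rw [Submodule.map_span]
    simp only [LinearEquiv.coe_coe]
    rw [himage, hspanF]
  · intro i hi
    rw [hρ i]
    exact hc₂ i hi
end

section
/- Let F be a free abelian group with basis B = {e_i : i ∈ I}, I infinite, and let D be a subset of B disjoint from {e_i}. Suppose u_i ∈ ⟨D⟩ for each i ∈ I. Then the endomorphism of F = ⟨D⟩ ⊕ ⟨e_i : i ∈ I⟩ fixing D pointwise and sending e_i to e_i + u_i is an automorphism, and it is a product of two automorphisms each fixing pointwise a moiety of {e_i : i ∈ I} together with D. -/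
private lemma fix_closure_aux {F : Type*} [AddCommGroup F] (φ : F →ₗ[ℤ] F)
    (s : Set F) (hs : ∀ x ∈ s, φ x = x) : ∀ x ∈ AddSubgroup.closure s, φ x = x := by
  intro x hx
  induction hx using AddSubgroup.closure_induction with
  | mem y hy => exact hs y hy
  | zero => exact φ.map_zero
  | add a b _ _ ha hb => rw [φ.map_add, ha, hb]
  | neg a _ ha => rw [φ.map_neg, ha]

/-- Free abelian group with basis indexed by `D ⊕ I`, `I` infinite; `u i` lies in the
subgroup generated by the `D`-part. The map fixing `D` pointwise and sending `e_i ↦ e_i + u_i`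
is an automorphism, and it is a product `π₁ * π₂` of two automorphisms, each fixing pointwise
`D` together with one half of a moiety partition `I = I₁ ⊔ I₁ᶜ`. -/
theorem stmt_7 {F D I : Type*} [AddCommGroup F] [Infinite I]
    (b : Module.Basis (D ⊕ I) ℤ F) (u : I → F)
    (hu : ∀ i, u i ∈ AddSubgroup.closure (Set.range fun d : D => b (Sum.inl d)))
    (I₁ : Set I) (hI₁ : Cardinal.mk I₁ = Cardinal.mk ↥(I₁ᶜ)) :
    ∃ π₁ π₂ : AddAut F,
      (∀ d : D, π₁ (b (Sum.inl d)) = b (Sum.inl d)) ∧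
      (∀ d : D, π₂ (b (Sum.inl d)) = b (Sum.inl d)) ∧
      (∀ i ∈ I₁, π₁ (b (Sum.inr i)) = b (Sum.inr i) + u i) ∧
      (∀ i ∉ I₁, π₁ (b (Sum.inr i)) = b (Sum.inr i)) ∧
      (∀ i ∈ I₁, π₂ (b (Sum.inr i)) = b (Sum.inr i)) ∧
      (∀ i ∉ I₁, π₂ (b (Sum.inr i)) = b (Sum.inr i) + u i) ∧
      (∀ d : D, (π₁ + π₂) (b (Sum.inl d)) = b (Sum.inl d)) ∧
      (∀ i : I, (π₁ + π₂) (b (Sum.inr i)) = b (Sum.inr i) + u i) := by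
  classical
  -- c₁ i is the shift applied by π₁, c₂ by π₂
  set c₁ : I → F := fun i => if i ∈ I₁ then u i else 0 with hc₁
  set c₂ : I → F := fun i => if i ∈ I₁ then 0 else u i with hc₂
  have hc₁mem : ∀ i, c₁ i ∈ AddSubgroup.closure (Set.range fun d : D => b (Sum.inl d)) := by
    intro i; by_cases h : i ∈ I₁ <;> simp [hc₁, h, hu i, AddSubgroup.zero_mem]
  have hc₂mem : ∀ i, c₂ i ∈ AddSubgroup.closure (Set.range fun d : D => b (Sum.inl d)) := by
    intro i; by_cases h : i ∈ I₁ <;> simp [hc₂, h, hu i, AddSubgroup.zero_mem]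
  -- build an automorphism for a general shift c with values in ⟨D⟩
  have key : ∀ c : I → F,
      (∀ i, c i ∈ AddSubgroup.closure (Set.range fun d : D => b (Sum.inl d))) →
      ∃ π : AddAut F, (∀ d : D, π (b (Sum.inl d)) = b (Sum.inl d)) ∧
        (∀ i : I, π (b (Sum.inr i)) = b (Sum.inr i) + c i) := by
    intro c hc
    let f : F →ₗ[ℤ] F := b.constr ℤ (Sum.elim (fun d => b (Sum.inl d))
      (fun i => b (Sum.inr i) + c i))
    let g : F →ₗ[ℤ] F := b.constr ℤ (Sum.elim (fun d => b (Sum.inl d))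
      (fun i => b (Sum.inr i) - c i))
    have hf : ∀ d : D, f (b (Sum.inl d)) = b (Sum.inl d) := fun d => b.constr_basis ℤ _ _
    have hg : ∀ d : D, g (b (Sum.inl d)) = b (Sum.inl d) := fun d => b.constr_basis ℤ _ _
    have hfi : ∀ i : I, f (b (Sum.inr i)) = b (Sum.inr i) + c i := fun i => b.constr_basis ℤ _ _
    have hgi : ∀ i : I, g (b (Sum.inr i)) = b (Sum.inr i) - c i := fun i => b.constr_basis ℤ _ _
    have hfix_f : ∀ i, f (c i) = c i := fun i => fix_closure_aux f _
      (by rintro x ⟨d, rfl⟩; exact hf d) _ (hc i)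
    have hfix_g : ∀ i, g (c i) = c i := fun i => fix_closure_aux g _
      (by rintro x ⟨d, rfl⟩; exact hg d) _ (hc i)
    have hfg : f ∘ₗ g = LinearMap.id := by
      refine b.ext ?_; rintro (d | i)
      · simp [hg d, hf d]
      · simp only [LinearMap.comp_apply, hgi i, map_sub, hfi i, hfix_f i, LinearMap.id_apply]
        abel
    have hgf : g ∘ₗ f = LinearMap.id := by
      refine b.ext ?_; rintro (d | i)
      · simp [hg d, hf d]
      · simp only [LinearMap.comp_apply, hfi i, map_add, hgi i, hfix_g i, LinearMap.id_apply]
        abel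
    let e : F ≃ₗ[ℤ] F := LinearEquiv.ofLinear f g hfg hgf
    exact ⟨e.toAddEquiv, hf, hfi⟩
  obtain ⟨π₁, hπ₁D, hπ₁I⟩ := key c₁ hc₁mem
  obtain ⟨π₂, hπ₂D, hπ₂I⟩ := key c₂ hc₂mem
  have hfix₂ : ∀ x ∈ AddSubgroup.closure (Set.range fun d : D => b (Sum.inl d)),
      π₁ x = x := by
    intro x hx
    induction hx using AddSubgroup.closure_induction with
    | mem y hy => obtain ⟨d, rfl⟩ := hy; exact hπ₁D d
    | zero => exact map_zero π₁
    | add a b _ _ ha hb => rw [map_add, ha, hb]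
    | neg a _ ha => rw [map_neg, ha]
  refine ⟨π₁, π₂, hπ₁D, hπ₂D, ?_, ?_, ?_, ?_, ?_, ?_⟩
  · intro i hi; rw [hπ₁I i]; simp [hc₁, hi]
  · intro i hi; rw [hπ₁I i]; simp [hc₁, hi]
  · intro i hi; rw [hπ₂I i]; simp [hc₂, hi]
  · intro i hi; rw [hπ₂I i]; simp [hc₂, hi]
  · intro d; show π₁ (π₂ (b (Sum.inl d))) = _; rw [hπ₂D d, hπ₁D d]
  · intro i
    show π₁ (π₂ (b (Sum.inr i))) = _
    rw [hπ₂I i, map_add, hπ₁I i, hfix₂ _ (hc₂mem i)]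
    by_cases h : i ∈ I₁ <;> simp [hc₁, hc₂, h] <;> abel
end

section
/- Let F be a free group with basis B, c ≥ 2, and N = F/γ_c(F). For any family {c_b : b ∈ B} of elements of γ_2(N), the endomorphism of N determined by sending (the image of) b to b·c_b for each b ∈ B is an automorphism of N. -/
open Subgroup
open scoped commutatorElement

section Aux

variable {G : Type*} [Group G]

/-- Three subgroups lemma, relative form. -/
lemma aux_three_subgroups (A B C K : Subgroup G) [K.Normal]
    (h1 : ⁅⁅B, C⁆, A⁆ ≤ K) (h2 : ⁅⁅C, A⁆, B⁆ ≤ K) : ⁅⁅A, B⁆, C⁆ ≤ K := by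
  let q := QuotientGroup.mk' K
  have key : ∀ X Y Z : Subgroup G,
      ⁅⁅X, Y⁆, Z⁆ ≤ K ↔ ⁅⁅Subgroup.map q X, Subgroup.map q Y⁆, Subgroup.map q Z⁆ = ⊥ := by
    intro X Y Z
    rw [← Subgroup.map_commutator, ← Subgroup.map_commutator, Subgroup.map_eq_bot_iff,
      QuotientGroup.ker_mk']
  rw [key]
  exact Subgroup.commutator_commutator_eq_bot_of_rotate
    ((key _ _ _).mp h1) ((key _ _ _).mp h2)

/-- `⁅γ_n, γ_m⁆ ≤ γ_{n+m+1}` for the lower central series (0-indexed). -/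
lemma aux_comm_lcs (G : Type*) [Group G] :
    ∀ (m n : ℕ), ⁅(⊤ : Subgroup G).lowerCentralSeries n, (⊤ : Subgroup G).lowerCentralSeries m⁆ ≤
      (⊤ : Subgroup G).lowerCentralSeries (n + m + 1)
  | 0, n => by
    rw [Subgroup.lowerCentralSeries_zero]
    exact le_of_eq rfl
  | m + 1, n => by
    have IH1 := aux_comm_lcs G m (n + 1)
    have IH2 := aux_comm_lcs G m n
    have hK : (⊤ : Subgroup G).lowerCentralSeries (n + 1 + m + 1) = (⊤ : Subgroup G).lowerCentralSeries (n + (m + 1) + 1) := by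
      congr 1; omega
    rw [Subgroup.commutator_comm,
      show (⊤ : Subgroup G).lowerCentralSeries (m + 1) = ⁅(⊤ : Subgroup G).lowerCentralSeries m, ⊤⁆ from rfl]
    apply aux_three_subgroups
    · -- ⁅⁅⊤, γ n⁆, γ m⁆ ≤ γ (n + (m+1) + 1)
      rw [Subgroup.commutator_comm (⊤ : Subgroup G),
        show ⁅(⊤ : Subgroup G).lowerCentralSeries n, (⊤ : Subgroup G)⁆ = (⊤ : Subgroup G).lowerCentralSeries (n + 1) from rfl]
      exact hK ▸ IH1
    · -- ⁅⁅γ n, γ m⁆, ⊤⁆ ≤ γ (n + (m+1) + 1)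
      calc ⁅⁅(⊤ : Subgroup G).lowerCentralSeries n, (⊤ : Subgroup G).lowerCentralSeries m⁆, (⊤ : Subgroup G)⁆
          ≤ ⁅(⊤ : Subgroup G).lowerCentralSeries (n + m + 1), (⊤ : Subgroup G)⁆ :=
            Subgroup.commutator_mono IH2 le_rfl
        _ = (⊤ : Subgroup G).lowerCentralSeries (n + m + 1 + 1) := rfl
        _ = (⊤ : Subgroup G).lowerCentralSeries (n + (m + 1) + 1) := rfl

/-- The subgroup of elements `x` with `f x * x⁻¹ ∈ K`, for `K` normal. -/
def auxCongSub (f : G →* G) (K : Subgroup G) [K.Normal] : Subgroup G where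
  carrier := {x | f x * x⁻¹ ∈ K}
  one_mem' := by simpa using one_mem K
  mul_mem' := by
    intro x y hx hy
    have hxy : f (x * y) * (x * y)⁻¹ = (f x * x⁻¹) * (x * (f y * y⁻¹) * x⁻¹) := by
      rw [map_mul]; group
    show f (x * y) * (x * y)⁻¹ ∈ K
    rw [hxy]
    exact mul_mem hx (Subgroup.Normal.conj_mem ‹K.Normal› _ hy x)
  inv_mem' := by
    intro x hx
    have hxi : f x⁻¹ * (x⁻¹)⁻¹ = x⁻¹ * (f x * x⁻¹)⁻¹ * (x⁻¹)⁻¹ := by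
      rw [map_inv]; group
    show f x⁻¹ * (x⁻¹)⁻¹ ∈ K
    rw [hxi]
    exact Subgroup.Normal.conj_mem ‹K.Normal› _ (inv_mem hx) x⁻¹

@[simp] lemma mem_auxCongSub {f : G →* G} {K : Subgroup G} [K.Normal] {x : G} :
    x ∈ auxCongSub f K ↔ f x * x⁻¹ ∈ K := Iff.rfl

/-- Commutator computation: a central factor on the left disappears, and a factor
commuting with `g` (with everything relevant central) also disappears. -/
lemma aux_commutator_eq {Q : Type*} [Group Q] (A g B y : Q)
    (hA : ∀ v, Commute A v) (hC : ∀ v, Commute ⁅g, y⁆ v) (hgB : Commute g B) :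
    ⁅A * g, B * y⁆ = ⁅g, y⁆ := by
  have h1 : ∀ x : Q, (A * g) * x * (A * g)⁻¹ = g * x * g⁻¹ := by
    intro x
    calc (A * g) * x * (A * g)⁻¹ = A * (g * x * g⁻¹) * A⁻¹ := by group
      _ = (g * x * g⁻¹) * A * A⁻¹ := by rw [(hA _).eq]
      _ = g * x * g⁻¹ := by group
  calc ⁅A * g, B * y⁆ = ((A * g) * (B * y) * (A * g)⁻¹) * (B * y)⁻¹ := by
        rw [commutatorElement_def]
    _ = (g * (B * y) * g⁻¹) * (B * y)⁻¹ := by rw [h1]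
    _ = (g * B) * (y * g⁻¹ * y⁻¹ * B⁻¹) := by group
    _ = (B * g) * (y * g⁻¹ * y⁻¹ * B⁻¹) := by rw [hgB.eq]
    _ = B * (g * y * g⁻¹ * y⁻¹) * B⁻¹ := by group
    _ = B * ⁅g, y⁆ * B⁻¹ := by rw [commutatorElement_def]
    _ = ⁅g, y⁆ * B * B⁻¹ := by rw [← (hC B).eq]
    _ = ⁅g, y⁆ := by group

/-- Key lemma: if `f` is the identity modulo the commutator subgroup, then `f` is the
identity on `γ_k / γ_{k+1}` for every `k`. -/
lemma aux_key (f : G →* G) (hf : ∀ x, f x * x⁻¹ ∈ (⊤ : Subgroup G).lowerCentralSeries 1) :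
    ∀ (k : ℕ) (x : G), x ∈ (⊤ : Subgroup G).lowerCentralSeries k →
      f x * x⁻¹ ∈ (⊤ : Subgroup G).lowerCentralSeries (k + 1) := by
  intro k
  induction k with
  | zero => intro x _; exact hf x
  | succ k ih =>
    suffices h : (⊤ : Subgroup G).lowerCentralSeries (k + 1) ≤ auxCongSub f ((⊤ : Subgroup G).lowerCentralSeries (k + 2)) by
      intro x hx; exact h hx
    show ⁅(⊤ : Subgroup G).lowerCentralSeries k, ⊤⁆ ≤ auxCongSub f ((⊤ : Subgroup G).lowerCentralSeries (k + 2))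
    rw [Subgroup.commutator_le]
    intro g hg y _
    rw [mem_auxCongSub]
    set K := (⊤ : Subgroup G).lowerCentralSeries (k + 2) with hKdef
    let q := QuotientGroup.mk' K
    have hcentral : ∀ u, u ∈ (⊤ : Subgroup G).lowerCentralSeries (k + 1) → ∀ v : G ⧸ K, Commute (q u) v := by
      intro u hu v
      obtain ⟨w, rfl⟩ := QuotientGroup.mk'_surjective K v
      have hmem : ⁅u, w⁆ ∈ K :=
        Subgroup.commutator_mem_commutator hu (Subgroup.mem_top w)
      have : ⁅q u, q w⁆ = 1 := by
        rw [← map_commutatorElement]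
        exact (QuotientGroup.eq_one_iff _).mpr hmem
      exact commutatorElement_eq_one_iff_commute.mp this
    have hak : f g * g⁻¹ ∈ (⊤ : Subgroup G).lowerCentralSeries (k + 1) := ih g hg
    have hbk : f y * y⁻¹ ∈ (⊤ : Subgroup G).lowerCentralSeries 1 := hf y
    have hgb : ⁅g, f y * y⁻¹⁆ ∈ K := by
      have := aux_comm_lcs G 1 k (Subgroup.commutator_mem_commutator hg hbk)
      rwa [show k + 1 + 1 = k + 2 from rfl] at this
    have hgy : ⁅g, y⁆ ∈ (⊤ : Subgroup G).lowerCentralSeries (k + 1) :=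
      Subgroup.commutator_mem_commutator hg (Subgroup.mem_top y)
    have hmain : q (f ⁅g, y⁆) = q ⁅g, y⁆ := by
      have e1 : q (f g) = q (f g * g⁻¹) * q g := by rw [← map_mul]; congr 1; group
      have e2 : q (f y) = q (f y * y⁻¹) * q y := by rw [← map_mul]; congr 1; group
      rw [map_commutatorElement f, map_commutatorElement q, e1, e2]
      refine aux_commutator_eq _ _ _ _ (hcentral _ hak) ?_ ?_
      · intro v
        rw [← map_commutatorElement]
        exact hcentral _ hgy v
      · have : ⁅q g, q (f y * y⁻¹)⁆ = 1 := by
          rw [← map_commutatorElement]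
          exact (QuotientGroup.eq_one_iff _).mpr hgb
        exact commutatorElement_eq_one_iff_commute.mp this
    have : q (f ⁅g, y⁆ * ⁅g, y⁆⁻¹) = 1 := by
      rw [map_mul, map_inv, hmain, mul_inv_cancel]
    exact (QuotientGroup.eq_one_iff _).mp this

/-- The lower central series maps onto the lower central series under surjections. -/
lemma aux_map_lcs_eq {H : Type*} [Group H] (f : G →* H) (hf : Function.Surjective f) (n : ℕ) :
    Subgroup.map f ((⊤ : Subgroup G).lowerCentralSeries n) = (⊤ : Subgroup H).lowerCentralSeries n := by
  induction n with
  | zero => exact Subgroup.map_top_of_surjective f hf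
  | succ n ih =>
    show Subgroup.map f ⁅(⊤ : Subgroup G).lowerCentralSeries n, ⊤⁆ = ⁅(⊤ : Subgroup H).lowerCentralSeries n, ⊤⁆
    rw [Subgroup.map_commutator, ih, Subgroup.map_top_of_surjective f hf]

end Aux

/-- Let `N = F/γ_c(F)` be the free nilpotent group of class `c - 1` on `B` (with
`γ_k G = (⊤ : Subgroup G).lowerCentralSeries (k-1)`, `c ≥ 2`). For any family `c_b ∈ γ₂(N)` `(b ∈ B)`,
the endomorphism determined by `b ↦ b · c_b` is an automorphism of `N`. -/
theorem stmt_10 {B : Type*} (c : ℕ) (hc : 2 ≤ c)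
    (N : Type*) [Group N] (π : FreeGroup B →* N) (hπ : Function.Surjective π)
    (hker : π.ker = (⊤ : Subgroup (FreeGroup B)).lowerCentralSeries (c - 1))
    (cb : B → N) (hcb : ∀ b : B, cb b ∈ commutator N) :
    ∃ φ : MulAut N, ∀ b : B, φ (π (FreeGroup.of b)) = π (FreeGroup.of b) * cb b := by
  -- `N` is nilpotent of class `≤ c - 1`
  have hbot : (⊤ : Subgroup N).lowerCentralSeries (c - 1) = ⊥ := by
    rw [← aux_map_lcs_eq π hπ (c - 1), ← hker, Subgroup.map_eq_bot_iff]
  -- the lift of `b ↦ π b * cb b` to the free group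
  set f₀ : FreeGroup B →* N := FreeGroup.lift (fun b => π (FreeGroup.of b) * cb b) with hf₀
  have hker₀ : π.ker ≤ f₀.ker := by
    intro x hx
    rw [hker] at hx
    have : f₀ x ∈ (⊤ : Subgroup N).lowerCentralSeries (c - 1) :=
      Subgroup.lowerCentralSeries.map f₀ (c - 1) ⟨x, hx, rfl⟩
    rw [hbot] at this
    exact this
  -- descend to an endomorphism of `N`
  set φ₀ : N →* N :=
    π.liftOfRightInverseAux (Function.surjInv hπ) (Function.rightInverse_surjInv hπ) f₀ hker₀
    with hφ₀
  have hcomp : ∀ x : FreeGroup B, φ₀ (π x) = f₀ x := fun x =>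
    π.liftOfRightInverseAux_comp_apply _ _ f₀ hker₀ x
  have hb : ∀ b : B, φ₀ (π (FreeGroup.of b)) = π (FreeGroup.of b) * cb b := by
    intro b
    rw [hcomp, hf₀, FreeGroup.lift_apply_of]
  -- φ₀ is the identity modulo the commutator subgroup
  have hcong : ∀ x : N, φ₀ x * x⁻¹ ∈ (⊤ : Subgroup N).lowerCentralSeries 1 := by
    have htop : (⊤ : Subgroup N) ≤ auxCongSub φ₀ ((⊤ : Subgroup N).lowerCentralSeries 1) := by
      have : Subgroup.map π ⊤ = ⊤ := Subgroup.map_top_of_surjective π hπ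
      nth_rw 1 [← this]
      rw [← FreeGroup.closure_range_of B, MonoidHom.map_closure, Subgroup.closure_le]
      rintro x ⟨y, ⟨b, rfl⟩, rfl⟩
      rw [SetLike.mem_coe, mem_auxCongSub, hb]
      exact Subgroup.Normal.conj_mem (by infer_instance) _ (hcb b) _
    intro x
    exact htop (Subgroup.mem_top x)
  -- injectivity
  have hinj : Function.Injective φ₀ := by
    rw [injective_iff_map_eq_one]
    intro x hx
    have hall : ∀ k, x ∈ (⊤ : Subgroup N).lowerCentralSeries k := by
      intro k
      induction k with
      | zero => exact Subgroup.mem_top x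
      | succ k ih =>
        have := aux_key φ₀ hcong k x ih
        rw [hx, one_mul] at this
        exact (inv_mem_iff).mp this
    have := hall (c - 1)
    rwa [hbot, Subgroup.mem_bot] at this
  -- surjectivity
  have hsurj : Function.Surjective φ₀ := by
    intro x
    have hall : ∀ k, ∃ y, x * (φ₀ y)⁻¹ ∈ (⊤ : Subgroup N).lowerCentralSeries k := by
      intro k
      induction k with
      | zero => exact ⟨1, Subgroup.mem_top _⟩
      | succ k ih =>
        obtain ⟨y, hy⟩ := ih
        refine ⟨x * (φ₀ y)⁻¹ * y, ?_⟩
        set z := x * (φ₀ y)⁻¹ with hz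
        have hkey := aux_key φ₀ hcong k z hy
        have heq : x * (φ₀ (z * y))⁻¹ = (φ₀ z * z⁻¹)⁻¹ := by
          rw [map_mul, hz]; group
        rw [heq]
        exact inv_mem hkey
    obtain ⟨y, hy⟩ := hall (c - 1)
    rw [hbot, Subgroup.mem_bot] at hy
    exact ⟨y, (mul_inv_eq_one.mp hy).symm⟩
  exact ⟨MulEquiv.ofBijective φ₀ ⟨hinj, hsurj⟩, hb⟩
end

section
/- Let F be a relatively free algebra of infinite rank κ having the small index property. Then every proper normal subgroup of Aut(F) has index strictly greater than κ, and Aut(F) is a perfect group. -/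
/-- Abstract form of Proposition "small index property ⟹ perfect": let `Γ` act (by
automorphisms) on a relatively free algebra `F` of infinite rank `κ`.  Assume the small
index property (`hsip`): every subgroup of index `≤ κ` contains the pointwise stabilizer of
a set of cardinality `< κ`; and the generation fact (`hgen`): `Γ` is generated by the
conjugates of any pointwise stabilizer of a set of cardinality `< κ`.  Then every proper
normal subgroup of `Γ` has index `> κ`, and `Γ` is perfect. -/
theorem stmt_12 {Γ F : Type u} [Group Γ] [MulAction Γ F]
    (κ : Cardinal.{u}) (hκ : Cardinal.aleph0 ≤ κ)
    (hsip : ∀ S : Subgroup Γ, Cardinal.mk (Γ ⧸ S) ≤ κ →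
      ∃ U : Set F, Cardinal.mk U < κ ∧ (⨅ u ∈ U, MulAction.stabilizer Γ u) ≤ S)
    (hgen : ∀ U : Set F, Cardinal.mk U < κ →
      Subgroup.normalClosure (↑(⨅ u ∈ U, MulAction.stabilizer Γ u) : Set Γ) = ⊤) :
    (∀ N : Subgroup Γ, N.Normal → Cardinal.mk (Γ ⧸ N) ≤ κ → N = ⊤) ∧
    commutator Γ = ⊤ := by
  have part1 : ∀ N : Subgroup Γ, N.Normal → Cardinal.mk (Γ ⧸ N) ≤ κ → N = ⊤ := by
    intro N hN hidx
    obtain ⟨U, hU, hle⟩ := hsip N hidx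
    have h1 : Subgroup.normalClosure (↑(⨅ u ∈ U, MulAction.stabilizer Γ u) : Set Γ) ≤ N :=
      Subgroup.normalClosure_le_normal hle
    rw [hgen U hU] at h1
    exact top_le_iff.mp h1
  refine ⟨part1, ?_⟩
  by_contra hne
  -- get an element outside the commutator subgroup
  obtain ⟨g, hg⟩ : ∃ g : Γ, g ∉ commutator Γ := by
    by_contra h
    push_neg at h
    exact hne (Subgroup.eq_top_iff' _ |>.mpr h)
  -- its image in the abelianization is nonzero (additively)
  have hx : Additive.ofMul (Abelianization.of g) ≠ (0 : Additive (Abelianization Γ)) := by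
    intro h
    apply hg
    have : Abelianization.of g = 1 := h
    exact (QuotientGroup.eq_one_iff g).mp this
  obtain ⟨c, hc⟩ := CharacterModule.exists_character_apply_ne_zero_of_ne_zero hx
  -- build a hom Γ →* Multiplicative (AddCircle (1 : ℚ))
  let f : Γ →* Multiplicative (AddCircle (1 : ℚ)) :=
    { toFun := fun x => Multiplicative.ofAdd (c (Additive.ofMul (Abelianization.of x)))
      map_one' := by simp
      map_mul' := by
        intro x y
        simp [ofMul_mul, map_add, ofAdd_add] }
  have hker_norm : f.ker.Normal := MonoidHom.normal_ker f
  have hcnt : Countable (Γ ⧸ f.ker) := by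
    have h0 : Countable (AddCircle (1 : ℚ)) := Quotient.countable
    have h1 : Countable (Multiplicative (AddCircle (1 : ℚ))) := h0
    have : Function.Injective (QuotientGroup.kerLift f) := QuotientGroup.kerLift_injective f
    exact this.countable
  have hidx : Cardinal.mk (Γ ⧸ f.ker) ≤ κ :=
    le_trans (Cardinal.mk_le_aleph0) hκ
  have htop := part1 f.ker hker_norm hidx
  have : f g = 1 := by
    have : g ∈ f.ker := htop ▸ Subgroup.mem_top g
    exact this
  apply hc
  simpa [f] using this
end

section
/- Let F be a free abelian group with basis B of infinite cardinality. Let D ⊆ B with |D| < |B| and let σ ∈ Aut(F) fix D pointwise. Write E = B \ D. Then there exists a basis {e'_i} of the subgroup ⟨E⟩ and elements u_i ∈ ⟨D⟩ such that σ(e_i) = e'_i + u_i for every e_i ∈ E. -/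
universe v
/-- Let `F` be free abelian with basis `b` indexed by `D ⊕ I` of infinite cardinality,
with `|D| < |D ⊕ I|`, and let `σ ∈ Aut F` fix the `D`-part pointwise. Then there are a
basis `e'` of the subgroup generated by the `E = I`-part (i.e. a linearly independent family
spanning it) and elements `u i` of the subgroup generated by `D`
with `σ(e_i) = e'_i + u_i` for all `i`. -/
theorem stmt_15 {F : Type*} {D I : Type v} [AddCommGroup F] (b : Module.Basis (D ⊕ I) ℤ F)
    (hinf : Cardinal.aleph0 ≤ Cardinal.mk (D ⊕ I))
    (hD : Cardinal.mk D < Cardinal.mk (D ⊕ I))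
    (σ : AddAut F) (hσ : ∀ d : D, σ (b (Sum.inl d)) = b (Sum.inl d)) :
    ∃ (e' : I → F) (u : I → F),
      LinearIndependent ℤ e' ∧
      Submodule.span ℤ (Set.range e') =
        Submodule.span ℤ (Set.range fun i : I => b (Sum.inr i)) ∧
      (∀ i : I, u i ∈ Submodule.span ℤ (Set.range fun d : D => b (Sum.inl d))) ∧
      ∀ i : I, σ (b (Sum.inr i)) = e' i + u i := by
  classical
  set τ : F ≃ₗ[ℤ] F := (σ : F ≃+ F).toIntLinearEquiv with hτ
  have hτapp : ∀ x, τ x = σ x := fun x => rfl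
  set spanD : Submodule ℤ F := Submodule.span ℤ (Set.range fun d : D => b (Sum.inl d))
    with hspanD
  set spanE : Submodule ℤ F := Submodule.span ℤ (Set.range fun i : I => b (Sum.inr i))
    with hspanE
  -- the projection onto the E-part along the D-part
  set pE : F →ₗ[ℤ] F := b.constr ℤ (Sum.elim (fun _ => (0 : F)) (fun i => b (Sum.inr i)))
    with hpE
  set pD : F →ₗ[ℤ] F := b.constr ℤ (Sum.elim (fun d => b (Sum.inl d)) (fun _ => (0 : F)))
    with hpD
  have pE_inl : ∀ d, pE (b (Sum.inl d)) = 0 := fun d => by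
    rw [hpE, Module.Basis.constr_basis]; rfl
  have pE_inr : ∀ i, pE (b (Sum.inr i)) = b (Sum.inr i) := fun i => by
    rw [hpE, Module.Basis.constr_basis]; rfl
  have pD_inl : ∀ d, pD (b (Sum.inl d)) = b (Sum.inl d) := fun d => by
    rw [hpD, Module.Basis.constr_basis]; rfl
  have pD_inr : ∀ i, pD (b (Sum.inr i)) = 0 := fun i => by
    rw [hpD, Module.Basis.constr_basis]; rfl
  have hsum : ∀ x : F, pD x + pE x = x := by
    intro x
    have : pD + pE = LinearMap.id (R := ℤ) (M := F) := by
      apply b.ext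
      rintro (d | i) <;>
        simp [LinearMap.add_apply, pD_inl, pD_inr, pE_inl, pE_inr]
    calc pD x + pE x = (pD + pE) x := rfl
      _ = x := by rw [this]; rfl
  -- pD lands in spanD, pE lands in spanE
  have pD_mem : ∀ x, pD x ∈ spanD := by
    intro x
    have : (⊤ : Submodule ℤ F) ≤ Submodule.comap pD spanD := by
      rw [← b.span_eq]
      apply Submodule.span_le.2
      rintro _ ⟨(d | i), rfl⟩
      · simp only [SetLike.mem_coe, Submodule.mem_comap, pD_inl]
        exact Submodule.subset_span ⟨d, rfl⟩
      · simp only [SetLike.mem_coe, Submodule.mem_comap, pD_inr]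
        exact Submodule.zero_mem _
    exact this trivial
  have pE_mem : ∀ x, pE x ∈ spanE := by
    intro x
    have : (⊤ : Submodule ℤ F) ≤ Submodule.comap pE spanE := by
      rw [← b.span_eq]
      apply Submodule.span_le.2
      rintro _ ⟨(d | i), rfl⟩
      · simp only [SetLike.mem_coe, Submodule.mem_comap, pE_inl]
        exact Submodule.zero_mem _
      · simp only [SetLike.mem_coe, Submodule.mem_comap, pE_inr]
        exact Submodule.subset_span ⟨i, rfl⟩
    exact this trivial
  -- pE kills spanD and is the identity on spanE
  have pE_killD : ∀ x ∈ spanD, pE x = 0 := by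
    intro x hx
    induction hx using Submodule.span_induction with
    | mem x hx => obtain ⟨d, rfl⟩ := hx; exact pE_inl d
    | zero => simp
    | add x y _ _ hx hy => simp [map_add, hx, hy]
    | smul c x _ hx => simp [map_smul, hx]
  have pE_idE : ∀ x ∈ spanE, pE x = x := by
    intro x hx
    induction hx using Submodule.span_induction with
    | mem x hx => obtain ⟨i, rfl⟩ := hx; exact pE_inr i
    | zero => simp
    | add x y _ _ hx hy => simp [map_add, hx, hy]
    | smul c x _ hx => simp [map_smul, hx]
  -- σ and σ⁻¹ preserve spanD
  have hσ' : ∀ d : D, (-σ) (b (Sum.inl d)) = b (Sum.inl d) := by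
    intro d
    conv_lhs => rw [← hσ d]
    exact σ.symm_apply_apply _
  have σD : ∀ x ∈ spanD, τ x ∈ spanD := by
    intro x hx
    induction hx using Submodule.span_induction with
    | mem x hx =>
        obtain ⟨d, rfl⟩ := hx
        rw [hτapp, hσ d]; exact Submodule.subset_span ⟨d, rfl⟩
    | zero => simp
    | add x y _ _ hx hy => rw [map_add]; exact Submodule.add_mem _ hx hy
    | smul c x _ hx => rw [map_smul]; exact Submodule.smul_mem _ _ hx
  have σinvD : ∀ x ∈ spanD, τ.symm x ∈ spanD := by
    intro x hx
    induction hx using Submodule.span_induction with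
    | mem x hx =>
        obtain ⟨d, rfl⟩ := hx
        have : τ.symm (b (Sum.inl d)) = (-σ) (b (Sum.inl d)) := rfl
        rw [this, hσ' d]; exact Submodule.subset_span ⟨d, rfl⟩
    | zero => simp
    | add x y _ _ hx hy => rw [map_add]; exact Submodule.add_mem _ hx hy
    | smul c x _ hx => rw [map_smul]; exact Submodule.smul_mem _ _ hx
  -- spanD and spanE are disjoint
  have hdisj : Disjoint spanD spanE := by
    have h := b.linearIndependent.disjoint_span_image
      (s := Set.range (Sum.inl : D → D ⊕ I)) (t := Set.range (Sum.inr : I → D ⊕ I))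
      (by rw [Set.disjoint_iff_inter_eq_empty]
          ext x
          simp only [Set.mem_inter_iff, Set.mem_range, Set.mem_empty_iff_false, iff_false]
          rintro ⟨⟨d, rfl⟩, ⟨i, h⟩⟩
          exact Sum.inl_ne_inr h.symm)
    have h1 : (⇑b '' Set.range Sum.inl) = Set.range fun d : D => b (Sum.inl d) := by
      rw [← Set.range_comp]; rfl
    have h2 : (⇑b '' Set.range Sum.inr) = Set.range fun i : I => b (Sum.inr i) := by
      rw [← Set.range_comp]; rfl
    rwa [h1, h2] at h
  set f : F →ₗ[ℤ] F := pE ∘ₗ (τ : F →ₗ[ℤ] F) with hf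
  refine ⟨fun i => f (b (Sum.inr i)), fun i => pD (τ (b (Sum.inr i))), ?_, ?_, ?_, ?_⟩
  · -- linear independence
    have hli : LinearIndependent ℤ fun i : I => b (Sum.inr i) :=
      b.linearIndependent.comp Sum.inr Sum.inr_injective
    have hker : Disjoint spanE (LinearMap.ker f) := by
      rw [Submodule.disjoint_def]
      intro x hxE hxK
      have hfx : pE (τ x) = 0 := hxK
      have hτxD : τ x ∈ spanD := by
        have := hsum (τ x)
        rw [hfx, add_zero] at this
        rw [← this]; exact pD_mem _
      have hxD : x ∈ spanD := by
        have := σinvD _ hτxD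
        rwa [τ.symm_apply_apply] at this
      exact (Submodule.disjoint_def.1 hdisj) x hxD hxE
    exact hli.map (by rwa [hspanE] at hker)
  · -- span equality
    apply le_antisymm
    · apply Submodule.span_le.2
      rintro _ ⟨i, rfl⟩
      exact pE_mem _
    · -- spanE ≤ span (range (f ∘ b ∘ inr)) = map f spanE
      have hmap : Submodule.map f spanE =
          Submodule.span ℤ (Set.range fun i : I => f (b (Sum.inr i))) := by
        rw [hspanE, Submodule.map_span, ← Set.range_comp]; rfl
      rw [← hmap]
      intro y hy
      refine ⟨pE (τ.symm y), pE_mem _, ?_⟩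
      -- f (pE (σ⁻¹ y)) = y
      have hz : pD (τ.symm y) + pE (τ.symm y) = τ.symm y := hsum _
      have : τ (pE (τ.symm y)) = y - τ (pD (τ.symm y)) := by
        have := congrArg τ hz
        rw [map_add, τ.apply_symm_apply] at this
        linear_combination (norm := abel) this
      show pE (τ (pE (τ.symm y))) = y
      rw [this, map_sub, pE_killD _ (σD _ (pD_mem _)), pE_idE y hy, sub_zero]
  · exact fun i => pD_mem _
  · intro i
    have := hsum (τ (b (Sum.inr i)))
    rw [hτapp] at this
    rw [← this]
    show pD (σ (b (Sum.inr i))) + pE (σ (b (Sum.inr i))) =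
      pE (τ (b (Sum.inr i))) + pD (τ (b (Sum.inr i)))
    rw [hτapp]; abel
end

section
/- Let V be a vector space of infinite dimension κ over a division ring, with basis B, and let D ⊆ B with |D| < κ. Then the pointwise stabilizer of D in GL(V) is generated by the B-moietous automorphisms fixing D pointwise. -/
open Submodule Set Cardinal

namespace Stmt16Aux

variable {K V ι : Type*} [DivisionRing K] [AddCommGroup V] [Module K V]

def genSet (b : Module.Basis ι K V) (D : Set ι) : Set (V ≃ₗ[K] V) :=
  {σ : V ≃ₗ[K] V | (∀ i ∈ D, σ (b i) = b i) ∧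
    ∃ B₁ : Set ι, Cardinal.mk B₁ = Cardinal.mk ↥(B₁ᶜ) ∧
      (∀ i ∈ B₁, σ (b i) = b i) ∧
      (Submodule.span K (b '' B₁ᶜ)).map (σ : V →ₗ[K] V) =
        Submodule.span K (b '' B₁ᶜ)}

section CardinalAux

variable {D X T : Set ι}

lemma mk_compl_eq (hinf : ℵ₀ ≤ #ι) (hD : #D < #ι) : #↥(Dᶜ) = #ι := by
  rcases lt_or_ge (#↥(Dᶜ)) (#ι) with h | h
  · exact absurd (mk_sum_compl D ▸ Cardinal.add_lt_of_lt hinf hD h) (lt_irrefl _)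
  · exact le_antisymm (mk_set_le _) h

lemma mk_diff_eq (hinf : ℵ₀ ≤ #ι) (hX : #X = #ι) (hD : #D < #ι) : #↥(X \ D) = #ι := by
  have h1 : #↥(X ∩ D) < #ι := lt_of_le_of_lt (mk_le_mk_of_subset inter_subset_right) hD
  have h2 : X \ (X ∩ D) = X \ D := by ext x; simp [mem_diff]
  have h3 := Cardinal.mk_diff_add_mk (S := X) (T := X ∩ D) inter_subset_left
  rw [h2] at h3
  rcases lt_or_ge (#↥(X \ D)) (#ι) with h | h
  · exact absurd (hX ▸ h3 ▸ Cardinal.add_lt_of_lt hinf h h1).symm (by simp)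
  · exact le_antisymm (mk_set_le _) h

lemma exists_split (T : Set ι) (hT : ℵ₀ ≤ #T) :
    ∃ T₁ T₂ : Set ι, T₁ ∪ T₂ = T ∧ Disjoint T₁ T₂ ∧ #T₁ = #T ∧ #T₂ = #T := by
  have h : #(↥T ⊕ ↥T) = #↥T := by
    simp [Cardinal.mk_sum, Cardinal.add_eq_self hT]
  obtain ⟨e⟩ := Cardinal.eq.mp h
  set f : ↥T ⊕ ↥T → ι := fun x => ((e x : ↥T) : ι) with hf
  have hfinj : Function.Injective f :=
    Subtype.val_injective.comp e.injective
  refine ⟨f '' (range Sum.inl), f '' (range Sum.inr), ?_, ?_, ?_, ?_⟩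
  · apply Subset.antisymm
    · rintro x (⟨y, _, rfl⟩ | ⟨y, _, rfl⟩) <;> exact (e y).2
    · intro x hx
      rcases h' : e.symm ⟨x, hx⟩ with y | y
      · exact Or.inl ⟨Sum.inl y, ⟨y, rfl⟩, by simp [hf, ← h', Equiv.apply_symm_apply]⟩
      · exact Or.inr ⟨Sum.inr y, ⟨y, rfl⟩, by simp [hf, ← h', Equiv.apply_symm_apply]⟩
  · rw [Set.disjoint_iff]
    rintro x ⟨⟨y, ⟨z, rfl⟩, h1⟩, ⟨y', ⟨z', rfl⟩, h2⟩⟩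
    have := hfinj (h1.trans h2.symm)
    simp at this
  · rw [Cardinal.mk_image_eq hfinj, Cardinal.mk_range_eq _ Sum.inl_injective]
  · rw [Cardinal.mk_image_eq hfinj, Cardinal.mk_range_eq _ Sum.inr_injective]

end CardinalAux

section SpanAux
variable (b : Module.Basis ι K V) {T : Set ι}

lemma isCompl_span (T : Set ι) :
    IsCompl (span K (b '' T)) (span K (b '' Tᶜ)) := by
  constructor
  · exact b.linearIndependent.disjoint_span_image disjoint_compl_right
  · rw [codisjoint_iff, ← span_union, ← image_union, union_compl_self, image_univ,
      b.span_eq]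

lemma fix_span {σ : V ≃ₗ[K] V} (h : ∀ i ∈ T, σ (b i) = b i) :
    ∀ v ∈ span K (b '' T), σ v = v := by
  intro v hv
  induction hv using span_induction with
  | mem x hx => obtain ⟨i, hi, rfl⟩ := hx; exact h i hi
  | zero => simp
  | add x y _ _ hx hy => simp [hx, hy]
  | smul c x _ hx => simp [hx]

lemma map_span_eq_of (σ : V ≃ₗ[K] V) (S : Set V)
    (h1 : ∀ x ∈ S, σ x ∈ span K S) (h2 : ∀ x ∈ S, σ.symm x ∈ span K S) :
    (span K S).map (σ : V →ₗ[K] V) = span K S := by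
  apply le_antisymm
  · rw [Submodule.map_span, span_le]
    rintro _ ⟨x, hx, rfl⟩
    exact h1 x hx
  · intro x hx
    refine ⟨σ.symm x, ?_, by simp⟩
    have : (span K S).map (σ.symm : V →ₗ[K] V) ≤ span K S := by
      rw [Submodule.map_span, span_le]
      rintro _ ⟨y, hy, rfl⟩
      exact h2 y hy
    exact this ⟨x, hx, rfl⟩

end SpanAux


section LemmaA

variable (b : Module.Basis ι K V) (D : Set ι)

lemma mem_closure_of_fix_compl (hinf : ℵ₀ ≤ #ι)
    (X : Set ι) (hXD : Disjoint X D) (hX : #X = #ι) (hCbig : #↥((X ∪ D)ᶜ) = #ι)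
    (ρ : V ≃ₗ[K] V) (hfix : ∀ i ∉ X, ρ (b i) = b i) :
    ρ ∈ Subgroup.closure (genSet b D) := by
  classical
  obtain ⟨C₁, C₂, hCun, hCdis, hC₁, hC₂⟩ := exists_split ((X ∪ D)ᶜ) (hCbig ▸ hinf)
  set Q := span K (b '' X) with hQdef
  set R := span K (b '' Xᶜ) with hRdef
  have hQR : IsCompl Q R := isCompl_span b X
  set P : V →ₗ[K] ↥Q := Q.linearProjOfIsCompl R hQR with hPdef
  have hfixR : ∀ v ∈ R, ρ v = v := fix_span b (fun i hi => hfix i hi)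
  have hPsub : ∀ v : V, (v - ↑(P v)) ∈ R := by
    intro v
    have : P (v - ↑(P v)) = 0 := by
      rw [map_sub, show P ↑(P v) = P v from Submodule.linearProjOfIsCompl_apply_left hQR (P v), sub_self]
    exact (Submodule.linearProjOfIsCompl_apply_eq_zero_iff hQR).1 this
  set α : ↥Q →ₗ[K] ↥Q := P ∘ₗ (ρ : V →ₗ[K] V) ∘ₗ Q.subtype with hαdef
  have hαapp : ∀ q : ↥Q, α q = P (ρ ↑q) := fun q => rfl
  have hαinj : Function.Injective α := by
    have hker : ∀ q : ↥Q, α q = 0 → q = 0 := by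
      intro q hq
      have h1 : ρ ↑q ∈ R := by
        rw [hαapp] at hq
        exact (Submodule.linearProjOfIsCompl_apply_eq_zero_iff hQR).1 hq
      have h3 : ρ (↑q : V) = ↑q := ρ.injective (hfixR _ h1)
      have h4 : (↑q : V) ∈ Q ⊓ R := ⟨q.2, h3 ▸ h1⟩
      rw [hQR.disjoint.eq_bot] at h4
      exact Subtype.ext (by simpa using h4)
    intro a c hac
    have := hker (a - c) (by rw [map_sub, hac, sub_self])
    rwa [sub_eq_zero] at this
  have hαsurj : Function.Surjective α := by
    intro x
    set y : V := ρ.symm ↑x with hy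
    refine ⟨P y, ?_⟩
    have hρy : ρ y = ↑x := ρ.apply_symm_apply ↑x
    have h1 : ρ (y - ↑(P y)) = y - ↑(P y) := hfixR _ (hPsub y)
    have h2 : ρ ↑(P y) = ↑x - (y - ↑(P y)) := by
      have harg : (↑(P y) : V) = y - (y - ↑(P y)) := (sub_sub_cancel y ↑(P y)).symm
      conv_lhs => rw [harg]
      rw [map_sub, hρy, h1]
    have e1 : P (↑x : V) = x := Submodule.linearProjOfIsCompl_apply_left hQR x
    have e2 : P (y - ↑(P y)) = 0 :=
      (Submodule.linearProjOfIsCompl_apply_eq_zero_iff hQR).2 (hPsub y)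
    have : α (P y) = P ↑x := by
      rw [hαapp, h2, map_sub, e2, sub_zero]
    rw [this, e1]
  set αe : ↥Q ≃ₗ[K] ↥Q := LinearEquiv.ofBijective α ⟨hαinj, hαsurj⟩ with hαe
  have hαeapp : ∀ q : ↥Q, αe q = α q := fun q => rfl
  set eQR := Submodule.prodEquivOfIsCompl Q R hQR with heQR
  set d : V ≃ₗ[K] V :=
    (eQR.symm.trans ((αe.prodCongr (LinearEquiv.refl K ↥R)).trans eQR)) with hd
  have hdQ : ∀ q : ↥Q, d ↑q = ↑(αe q) := by
    intro q
    show eQR ((αe.prodCongr (LinearEquiv.refl K ↥R)) (eQR.symm ↑q)) = ↑(αe q)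
    rw [Submodule.prodEquivOfIsCompl_symm_apply_left, LinearEquiv.prodCongr_apply]
    simp [heQR, Submodule.coe_prodEquivOfIsCompl']
  have hdR : ∀ r : ↥R, d ↑r = ↑r := by
    intro r
    show eQR ((αe.prodCongr (LinearEquiv.refl K ↥R)) (eQR.symm ↑r)) = ↑r
    rw [Submodule.prodEquivOfIsCompl_symm_apply_right, LinearEquiv.prodCongr_apply]
    simp [heQR, Submodule.coe_prodEquivOfIsCompl']
  have hdsymmQ : ∀ q : ↥Q, d.symm ↑q = ↑(αe.symm q) := by
    intro q
    rw [LinearEquiv.symm_apply_eq, hdQ, αe.apply_symm_apply]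
  have hdsymmR : ∀ r : ↥R, d.symm ↑r = ↑r := by
    intro r
    rw [LinearEquiv.symm_apply_eq, hdR]
  have hbR : ∀ i ∉ X, b i ∈ R := fun i hi => subset_span ⟨i, hi, rfl⟩
  have hbQ : ∀ i ∈ X, b i ∈ Q := fun i hi => subset_span ⟨i, hi, rfl⟩
  -- d is a generator
  have hdgen : d ∈ genSet b D := by
    refine ⟨fun i hi => hdR ⟨b i, hbR i (fun hx => hXD.ne_of_mem hx hi rfl)⟩, Xᶜ, ?_, ?_, ?_⟩
    · rw [compl_compl]
      have h1 : #↥(Xᶜ) = #ι := by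
        refine le_antisymm (mk_set_le _) ?_
        rw [← hCbig]
        exact mk_le_mk_of_subset (compl_subset_compl.2 subset_union_left)
      rw [h1, hX]
    · exact fun i hi => hdR ⟨b i, hbR i hi⟩
    · rw [compl_compl]
      refine map_span_eq_of d (b '' X) ?_ ?_
      · rintro _ ⟨i, hi, rfl⟩
        rw [hdQ ⟨b i, hbQ i hi⟩]
        exact (αe ⟨b i, hbQ i hi⟩).2
      · rintro _ ⟨i, hi, rfl⟩
        rw [hdsymmQ ⟨b i, hbQ i hi⟩]
        exact (αe.symm ⟨b i, hbQ i hi⟩).2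

  -- the unipotent part
  set u : V ≃ₗ[K] V := ρ * d⁻¹ with hu
  have huapp : ∀ v, u v = ρ (d.symm v) := fun v => rfl
  set N : V →ₗ[K] V := (u : V →ₗ[K] V) - LinearMap.id with hNdef
  have hNapp : ∀ v, N v = u v - v := fun v => rfl
  have hNbR : ∀ i ∉ X, N (b i) = 0 := by
    intro i hi
    rw [hNapp, huapp, hdsymmR ⟨b i, hbR i hi⟩, hfix i hi, sub_self]
  have hRker : ∀ v ∈ R, N v = 0 := by
    intro v hv
    have : R ≤ LinearMap.ker N := by
      rw [hRdef, span_le]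
      rintro _ ⟨i, hi, rfl⟩
      exact LinearMap.mem_ker.2 (hNbR i hi)
    exact LinearMap.mem_ker.1 (this hv)
  have hNmem : ∀ v, N v ∈ R := by
    have hle : span K (range b) ≤ Submodule.comap N R := by
      rw [span_le]
      rintro _ ⟨i, rfl⟩
      by_cases hi : i ∈ X
      · have hq : b i ∈ Q := hbQ i hi
        have hPu : P (u (b i)) = ⟨b i, hq⟩ := by
          rw [huapp, hdsymmQ ⟨b i, hq⟩]
          have h5 : P (ρ ↑(αe.symm ⟨b i, hq⟩)) = α (αe.symm ⟨b i, hq⟩) := (hαapp _).symm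
          rw [h5]
          exact αe.apply_symm_apply _
        have h6 : P (N (b i)) = 0 := by
          rw [hNapp, map_sub, hPu, show P (b i) = ⟨b i, hq⟩ from Submodule.linearProjOfIsCompl_apply_left hQR ⟨b i, hq⟩,
            sub_self]
        exact Submodule.mem_comap.2
          ((Submodule.linearProjOfIsCompl_apply_eq_zero_iff hQR).1 h6)
      · exact Submodule.mem_comap.2 (by rw [hNbR i hi]; exact zero_mem R)
    intro v
    exact hle (by rw [b.span_eq]; trivial)
  -- splitting the unipotent part in two
  set Q₂ := span K (b '' C₂) with hQ₂def
  set R₂ := span K (b '' C₂ᶜ) with hR₂def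
  have hQR₂ : IsCompl Q₂ R₂ := isCompl_span b C₂
  set P₂ : V →ₗ[K] V := Q₂.subtype ∘ₗ Q₂.linearProjOfIsCompl R₂ hQR₂ with hP₂def
  have hP₂mem : ∀ v, P₂ v ∈ Q₂ := fun v => (Q₂.linearProjOfIsCompl R₂ hQR₂ v).2
  have hP₂sub : ∀ v : V, v - P₂ v ∈ R₂ := by
    intro v
    have h7 : Q₂.linearProjOfIsCompl R₂ hQR₂ (v - P₂ v) = 0 := by
      rw [map_sub]
      have : Q₂.linearProjOfIsCompl R₂ hQR₂ (P₂ v) = Q₂.linearProjOfIsCompl R₂ hQR₂ v :=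
        Submodule.linearProjOfIsCompl_apply_left hQR₂ (Q₂.linearProjOfIsCompl R₂ hQR₂ v)
      rw [this, sub_self]
    exact (Submodule.linearProjOfIsCompl_apply_eq_zero_iff hQR₂).1 h7
  have hC₂sub : C₂ ⊆ (X ∪ D)ᶜ := hCun ▸ subset_union_right
  have hC₁sub : C₁ ⊆ (X ∪ D)ᶜ := hCun ▸ subset_union_left
  have hC₂X : C₂ ⊆ Xᶜ := fun i hi hx => hC₂sub hi (Or.inl hx)
  have hQ₂R : Q₂ ≤ R := span_mono (image_mono hC₂X)
  set N₂ : V →ₗ[K] V := P₂ ∘ₗ N with hN₂def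
  set N₁ : V →ₗ[K] V := N - N₂ with hN₁def
  have hN₂app : ∀ v, N₂ v = P₂ (N v) := fun v => rfl
  have hN₁app : ∀ v, N₁ v = N v - P₂ (N v) := fun v => rfl
  have hN₁mem : ∀ v, N₁ v ∈ R := fun v => by
    rw [hN₁app]; exact sub_mem (hNmem v) (hQ₂R (hP₂mem (N v)))
  have hN₂mem : ∀ v, N₂ v ∈ R := fun v => hQ₂R (hP₂mem (N v))
  have hN₁R₂ : ∀ v, N₁ v ∈ R₂ := fun v => hP₂sub (N v)
  have hN₂Q₂ : ∀ v, N₂ v ∈ Q₂ := fun v => hP₂mem (N v)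
  have hN₁ker : ∀ v ∈ R, N₁ v = 0 := by
    intro v hv
    rw [hN₁app, hRker v hv, map_zero, sub_self]
  have hN₂ker : ∀ v ∈ R, N₂ v = 0 := by
    intro v hv
    rw [hN₂app, hRker v hv, map_zero]
  have hN₁N₁ : ∀ v, N₁ (N₁ v) = 0 := fun v => hN₁ker _ (hN₁mem v)
  have hN₂N₂ : ∀ v, N₂ (N₂ v) = 0 := fun v => hN₂ker _ (hN₂mem v)
  have hN₁N₂ : ∀ v, N₁ (N₂ v) = 0 := fun v => hN₁ker _ (hN₂mem v)
  set u₁ : V ≃ₗ[K] V := LinearEquiv.ofLinear (LinearMap.id + N₁) (LinearMap.id - N₁)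
    (by ext v
        simp only [LinearMap.comp_apply, LinearMap.add_apply, LinearMap.sub_apply,
          LinearMap.id_apply, map_sub, hN₁N₁ v]
        abel)
    (by ext v
        simp only [LinearMap.comp_apply, LinearMap.add_apply, LinearMap.sub_apply,
          LinearMap.id_apply, map_add, hN₁N₁ v]
        abel) with hu₁def
  set u₂ : V ≃ₗ[K] V := LinearEquiv.ofLinear (LinearMap.id + N₂) (LinearMap.id - N₂)
    (by ext v
        simp only [LinearMap.comp_apply, LinearMap.add_apply, LinearMap.sub_apply,
          LinearMap.id_apply, map_sub, hN₂N₂ v]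
        abel)
    (by ext v
        simp only [LinearMap.comp_apply, LinearMap.add_apply, LinearMap.sub_apply,
          LinearMap.id_apply, map_add, hN₂N₂ v]
        abel) with hu₂def
  have hu₁app : ∀ v, u₁ v = v + N₁ v := fun v => rfl
  have hu₂app : ∀ v, u₂ v = v + N₂ v := fun v => rfl
  have hu₁symm : ∀ v, u₁.symm v = v - N₁ v := fun v => rfl
  have hu₂symm : ∀ v, u₂.symm v = v - N₂ v := fun v => rfl
  have hDX : ∀ i ∈ D, i ∉ X := fun i hi hx => (hXD.ne_of_mem hx hi) rfl
  -- u₁ is a generator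
  have hfixu₁ : ∀ i ∉ X, u₁ (b i) = b i := by
    intro i hi
    rw [hu₁app, hN₁ker _ (hbR i hi), add_zero]
  have hu₁gen : u₁ ∈ genSet b D := by
    refine ⟨fun i hi => hfixu₁ i (hDX i hi), C₂, ?_, fun i hi => hfixu₁ i (hC₂X hi), ?_⟩
    · have e1 : #↥C₂ = #ι := hC₂.trans hCbig
      have e2 : #↥(C₂ᶜ) = #ι := by
        refine le_antisymm (mk_set_le _) ?_
        rw [← hX]
        exact mk_le_mk_of_subset (fun i hi hc => hC₂X hc hi)
      rw [e1, e2]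
    · refine map_span_eq_of u₁ (b '' C₂ᶜ) ?_ ?_
      · rintro _ ⟨i, hi, rfl⟩
        rw [hu₁app]
        exact add_mem (subset_span ⟨i, hi, rfl⟩) (hN₁R₂ _)
      · rintro _ ⟨i, hi, rfl⟩
        rw [hu₁symm]
        exact sub_mem (subset_span ⟨i, hi, rfl⟩) (hN₁R₂ _)
  -- u₂ is a generator
  have hfixu₂ : ∀ i ∉ X, u₂ (b i) = b i := by
    intro i hi
    rw [hu₂app, hN₂ker _ (hbR i hi), add_zero]
  have hu₂gen : u₂ ∈ genSet b D := by
    refine ⟨fun i hi => hfixu₂ i (hDX i hi), (X ∪ C₂)ᶜ, ?_, ?_, ?_⟩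
    · have e1 : #↥((X ∪ C₂)ᶜ) = #ι := by
        refine le_antisymm (mk_set_le _) ?_
        rw [← hC₁.trans hCbig]
        refine mk_le_mk_of_subset (fun i hi => ?_)
        intro hmem
        rcases hmem with hx | hc
        · exact hC₁sub hi (Or.inl hx)
        · exact (hCdis.ne_of_mem hi hc) rfl
      have e2 : #↥(((X ∪ C₂)ᶜ)ᶜ) = #ι := by
        rw [compl_compl]
        exact le_antisymm (mk_set_le _)
          (hX ▸ mk_le_mk_of_subset subset_union_left)
      rw [e1, e2]
    · intro i hi
      exact hfixu₂ i (fun hx => hi (Or.inl hx))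
    · rw [compl_compl]
      refine map_span_eq_of u₂ (b '' (X ∪ C₂)) ?_ ?_
      · rintro _ ⟨i, hi, rfl⟩
        rw [hu₂app]
        refine add_mem (subset_span ⟨i, hi, rfl⟩) ?_
        exact span_mono (image_mono subset_union_right) (hN₂Q₂ _)
      · rintro _ ⟨i, hi, rfl⟩
        rw [hu₂symm]
        refine sub_mem (subset_span ⟨i, hi, rfl⟩) ?_
        exact span_mono (image_mono subset_union_right) (hN₂Q₂ _)
  -- assembling
  have hu12 : ∀ v, u v = u₁ (u₂ v) := by
    intro v
    rw [hu₂app, hu₁app, map_add, hN₁N₂ v, add_zero]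
    have h8 : u v = v + N v := by rw [hNapp]; abel
    rw [h8]
    have h9 : N v = N₁ v + N₂ v := by rw [hN₁app, hN₂app]; abel
    rw [h9]; abel
  have hfinal : ρ = u₁ * u₂ * d := by
    apply LinearEquiv.ext
    intro v
    have h1 : (u₁ * u₂ * d) v = u₁ (u₂ (d v)) := rfl
    rw [h1, ← hu12 (d v), huapp, d.symm_apply_apply]
  rw [hfinal]
  exact mul_mem (mul_mem (Subgroup.subset_closure hu₁gen)
    (Subgroup.subset_closure hu₂gen)) (Subgroup.subset_closure hdgen)

end LemmaA


section Perm

variable (b : Module.Basis ι K V) (D : Set ι)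

lemma perm_gen (π : Equiv.Perm ι) (hπD : ∀ i ∈ D, π i = i)
    (M : Set ι) (hM : ∀ i ∈ M, π i = i) (hMκ : #M = #ι) (hMc : #↥(Mᶜ) = #ι) :
    b.equiv b π ∈ genSet b D := by
  have happ : ∀ i, (b.equiv b π) (b i) = b (π i) := fun i => b.equiv_apply i b π
  have hπM : ∀ i, i ∉ M → π i ∉ M := by
    intro i hi hmem
    exact hi (by
      have := hM (π i) hmem
      exact (π.injective this ▸ hmem))
  have hπsymmM : ∀ i, i ∉ M → π.symm i ∉ M := by
    intro i hi hmem
    have := hM (π.symm i) hmem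
    rw [← this, Equiv.apply_symm_apply] at hmem
    exact hi hmem
  refine ⟨fun i hi => by rw [happ, hπD i hi], M, by rw [hMκ, hMc],
    fun i hi => by rw [happ, hM i hi], ?_⟩
  refine map_span_eq_of _ (b '' Mᶜ) ?_ ?_
  · rintro _ ⟨i, hi, rfl⟩
    rw [happ]
    exact subset_span ⟨π i, hπM i hi, rfl⟩
  · rintro _ ⟨i, hi, rfl⟩
    have hsymm : (b.equiv b π).symm (b i) = b (π.symm i) := by
      rw [LinearEquiv.symm_apply_eq, happ, Equiv.apply_symm_apply]
    rw [hsymm]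
    exact subset_span ⟨π.symm i, hπsymmM i hi, rfl⟩

lemma perm_mem_closure (hinf : ℵ₀ ≤ #ι)
    (π : Equiv.Perm ι) (hπD : ∀ i ∈ D, π i = i) :
    b.equiv b π ∈ Subgroup.closure (genSet b D) := by
  classical
  set supp := {i : ι | π i ≠ i} with hsuppdef
  have hsuppD : ∀ i ∈ D, i ∉ supp := fun i hi hs => hs (hπD i hi)
  have hsuppπ : ∀ i ∈ supp, π i ∈ supp := by
    intro i hi hfix
    exact hi (π.injective hfix)
  by_cases hs : #↥supp < #ι
  · have hfixbig : #↥(suppᶜ) = #ι := mk_compl_eq hinf hs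
    obtain ⟨M₁, M₂, hun, hdis, h1, h2⟩ := exists_split (suppᶜ) (hfixbig ▸ hinf)
    have hM₁sub : M₁ ⊆ suppᶜ := hun ▸ subset_union_left
    have hM₂sub : M₂ ⊆ suppᶜ := hun ▸ subset_union_right
    apply Subgroup.subset_closure
    refine perm_gen b D π hπD M₁ (fun i hi => not_not.1 (hM₁sub hi)) (h1.trans hfixbig) ?_
    refine le_antisymm (mk_set_le _) ?_
    rw [← (h2.trans hfixbig)]
    exact mk_le_mk_of_subset (fun i hi hmem => (hdis.ne_of_mem hmem hi) rfl)
  · have hsupp_eq : #↥supp = #ι := le_antisymm (mk_set_le _) (not_lt.1 hs)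
    -- Zorn's lemma to get a large `M₀` with `π '' M₀` disjoint from `M₀`
    set S : Set (Set ι) := {M : Set ι | M ⊆ supp ∧ Disjoint (π '' M) M} with hSdef
    obtain ⟨M₀, -, hmax⟩ := zorn_subset_nonempty S (by
      intro c hcS hchain hcne
      refine ⟨⋃₀ c, ⟨?_, ?_⟩, fun s hs => subset_sUnion_of_mem hs⟩
      · exact sUnion_subset (fun s hs => (hcS hs).1)
      · rw [Set.disjoint_left]
        rintro x ⟨m, hm, rfl⟩ hx
        obtain ⟨s₁, hs₁, hms₁⟩ := hm
        obtain ⟨s₂, hs₂, hxs₂⟩ := hx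
        rcases hchain.total hs₁ hs₂ with hsub | hsub
        · exact Set.disjoint_left.1 (hcS hs₂).2 ⟨m, hsub hms₁, rfl⟩ hxs₂
        · exact Set.disjoint_left.1 (hcS hs₁).2 ⟨m, hms₁, rfl⟩ (hsub hxs₂))
      ∅ ⟨empty_subset _, by simp⟩
    have hM₀S : M₀ ∈ S := hmax.1
    have hM₀big : #↥M₀ = #ι := by
      by_contra hne
      have hlt : #↥M₀ < #ι := lt_of_le_of_ne (mk_set_le _) hne
      have himg1 : #↥(π '' M₀) < #ι := lt_of_le_of_lt (mk_image_le) hlt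
      have himg2 : #↥(⇑π.symm '' M₀) < #ι := lt_of_le_of_lt (mk_image_le) hlt
      set Bad := M₀ ∪ (π '' M₀ ∪ ⇑π.symm '' M₀) with hBad
      have hBadlt : #↥Bad < #ι := by
        refine lt_of_le_of_lt (mk_union_le _ _) ?_
        exact Cardinal.add_lt_of_lt hinf hlt
          (lt_of_le_of_lt (mk_union_le _ _) (Cardinal.add_lt_of_lt hinf himg1 himg2))
      have : ¬ (supp ⊆ Bad) := by
        intro hsub
        exact absurd (hsupp_eq ▸ mk_le_mk_of_subset hsub) (not_le.2 hBadlt)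
      obtain ⟨x, hxsupp, hxBad⟩ := not_subset.1 this
      have hxM₀ : x ∉ M₀ := fun h => hxBad (Or.inl h)
      have hxπM₀ : x ∉ π '' M₀ := fun h => hxBad (Or.inr (Or.inl h))
      have hxπsM₀ : x ∉ ⇑π.symm '' M₀ := fun h => hxBad (Or.inr (Or.inr h))
      have hins : insert x M₀ ∈ S := by
        refine ⟨insert_subset hxsupp hM₀S.1, ?_⟩
        rw [image_insert_eq, Set.disjoint_left]
        rintro y (rfl | hy) hmem
        · rcases Set.mem_insert_iff.1 hmem with h | h
          · exact hxsupp h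
          · exact hxπsM₀ ⟨π x, h, π.symm_apply_apply x⟩
        · rcases Set.mem_insert_iff.1 hmem with rfl | hyM
          · exact hxπM₀ hy
          · exact Set.disjoint_left.1 hM₀S.2 hy hyM
      have := hmax.2 hins (subset_insert x M₀)
      exact hxM₀ (this (mem_insert x M₀))
    obtain ⟨M, M', hMun, hMdis, hMκ, hM'κ⟩ := exists_split M₀ (hM₀big ▸ hinf)
    have hMsub : M ⊆ M₀ := hMun ▸ subset_union_left
    have hM'sub : M' ⊆ M₀ := hMun ▸ subset_union_right
    have hdisj : Disjoint (π '' M) M :=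
      Set.disjoint_of_subset (image_mono hMsub) hMsub hM₀S.2
    set f : ι → ι := fun i => if i ∈ M then π i else if i ∈ π '' M then π.symm i else i
      with hfdef
    have hfM : ∀ i ∈ M, f i = π i := fun i hi => by simp only [hfdef, if_pos hi]
    have hfπM : ∀ i, i ∉ M → i ∈ π '' M → f i = π.symm i := fun i hi h2 => by
      simp only [hfdef, if_neg hi, if_pos h2]
    have hfelse : ∀ i, i ∉ M → i ∉ π '' M → f i = i := fun i hi h2 => by
      simp only [hfdef, if_neg hi, if_neg h2]
    have hinv : Function.Involutive f := by
      intro i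
      by_cases h1 : i ∈ M
      · have hπi : π i ∈ π '' M := ⟨i, h1, rfl⟩
        have hπiM : π i ∉ M := Set.disjoint_left.1 hdisj hπi
        rw [hfM i h1, hfπM _ hπiM hπi, π.symm_apply_apply]
      · by_cases h2 : i ∈ π '' M
        · obtain ⟨m, hm, rfl⟩ := h2
          rw [hfπM _ h1 ⟨m, hm, rfl⟩, π.symm_apply_apply, hfM _ hm]
        · rw [hfelse i h1 h2, hfelse i h1 h2]
    set hp : Equiv.Perm ι := hinv.toPerm f with hpdef
    have hpapp : ∀ i, hp i = f i := fun i => rfl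
    set g : Equiv.Perm ι := π.trans hp with hgdef
    have hgapp : ∀ i, g i = f (π i) := fun i => rfl
    have hπMD : ∀ i, i ∈ π '' M → i ∉ D := by
      rintro _ ⟨m, hm, rfl⟩ hD2
      have h1 : π (π m) = π m := hπD _ hD2
      exact (hM₀S.1 (hMsub hm)) (π.injective h1)
    have hDM : ∀ i ∈ D, i ∉ M := fun i hi hm => hsuppD i hi (hM₀S.1 (hMsub hm))
    have hfD : ∀ i ∈ D, f i = i := by
      intro i hi
      exact hfelse i (hDM i hi) (fun h => hπMD i h hi)
    have hgM : ∀ i ∈ M, g i = i := by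
      intro i hi
      have hπi : π i ∈ π '' M := ⟨i, hi, rfl⟩
      have hπiM : π i ∉ M := Set.disjoint_left.1 hdisj hπi
      rw [hgapp, hfπM _ hπiM hπi, π.symm_apply_apply]
    have hgD : ∀ i ∈ D, g i = i := by
      intro i hi
      rw [hgapp, hπD i hi, hfD i hi]
    have hM'f : ∀ i ∈ M', f i = i := by
      intro i hi
      have h1 : i ∉ M := fun h => (hMdis.ne_of_mem h hi) rfl
      have h2 : i ∉ π '' M := by
        rintro ⟨m, hm, rfl⟩
        exact Set.disjoint_left.1 hM₀S.2 ⟨m, hMsub hm, rfl⟩ (hM'sub hi)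
      exact hfelse i h1 h2
    -- assemble
    have hπeq : π = g.trans hp := by
      apply Equiv.ext
      intro i
      show π i = hp (g i)
      rw [hpapp, hgapp, hinv (π i)]
    have hmul : b.equiv b π = (b.equiv b hp) * (b.equiv b g) := by
      apply LinearEquiv.toLinearMap_injective
      apply b.ext
      intro i
      show (b.equiv b π) (b i) = (b.equiv b hp) ((b.equiv b g) (b i))
      rw [b.equiv_apply, b.equiv_apply, b.equiv_apply, hπeq]
      rfl
    rw [hmul]
    have hMc : #↥(Mᶜ) = #ι := by
      refine le_antisymm (mk_set_le _) ?_
      rw [← hM'κ.trans hM₀big]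
      exact mk_le_mk_of_subset (fun i hi hm => (hMdis.ne_of_mem hm hi) rfl)
    have hM'c : #↥(M'ᶜ) = #ι := by
      refine le_antisymm (mk_set_le _) ?_
      rw [← hMκ.trans hM₀big]
      exact mk_le_mk_of_subset (fun i hi hm => (hMdis.ne_of_mem hi hm) rfl)
    refine mul_mem (Subgroup.subset_closure ?_) (Subgroup.subset_closure ?_)
    · exact perm_gen b D hp hfD M' hM'f (hM'κ.trans hM₀big) hM'c
    · exact perm_gen b D g hgD M hgM (hMκ.trans hM₀big) hMc

end Perm


section Main

variable (b : Module.Basis ι K V) (D : Set ι)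

lemma li_set_image (T : Set ι) :
    LinearIndependent K (fun x : ↥(b '' T) => (x : V)) := by
  have h1 : LinearIndependent K (fun x : ↥T => b ↑x) :=
    b.linearIndependent.comp _ Subtype.val_injective
  have h2 := (linearIndepOn_id_range_iff h1.injective).2 h1
  have h3 : range (fun x : ↥T => b ↑x) = b '' T := (Set.image_eq_range _ _).symm
  rw [← h3]
  exact h2

universe u v w

lemma mk_span_image {K : Type u} {V : Type v} {ι : Type w} [DivisionRing K]
    [AddCommGroup V] [Module K V] (b : Module.Basis ι K V) (T : Set ι) :
    Cardinal.lift.{w} (Module.rank K ↥(span K (b '' T))) = Cardinal.lift.{v} (#↥T) := by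
  rw [rank_span_set (li_set_image b T), Cardinal.mk_image_eq_lift _ _ b.injective]

lemma main_mem_closure (hinf : ℵ₀ ≤ #ι) (hD : #D < #ι)
    (σ : V ≃ₗ[K] V) (hσ : ∀ i ∈ D, σ (b i) = b i) :
    σ ∈ Subgroup.closure (genSet b D) := by
  classical
  -- partition of `Dᶜ` into two moieties
  obtain ⟨A, C, hACun, hACdis, hA, hC⟩ := exists_split (Dᶜ) ((mk_compl_eq hinf hD) ▸ hinf)
  have hAκ : #↥A = #ι := hA.trans (mk_compl_eq hinf hD)
  have hCκ : #↥C = #ι := hC.trans (mk_compl_eq hinf hD)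
  have hAD : Disjoint A D := by
    rw [Set.disjoint_left]
    intro i hi hD2
    exact (hACun ▸ (Or.inl hi) : i ∈ Dᶜ) hD2
  have hCD : Disjoint C D := by
    rw [Set.disjoint_left]
    intro i hi hD2
    exact (hACun ▸ (Or.inr hi) : i ∈ Dᶜ) hD2
  have hDAc : (D ∪ A)ᶜ = C := by
    ext i
    constructor
    · intro hi
      have h1 : i ∈ Dᶜ := fun h => hi (Or.inl h)
      rcases (hACun ▸ h1 : i ∈ A ∪ C) with h | h
      · exact absurd (Or.inr h) hi
      · exact h
    · intro hi hmem
      rcases hmem with h | h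
      · exact hCD.ne_of_mem hi h rfl
      · exact hACdis.ne_of_mem h hi rfl
  have hDCc : (D ∪ C)ᶜ = A := by
    ext i
    constructor
    · intro hi
      have h1 : i ∈ Dᶜ := fun h => hi (Or.inl h)
      rcases (hACun ▸ h1 : i ∈ A ∪ C) with h | h
      · exact h
      · exact absurd (Or.inr h) hi
    · intro hi hmem
      rcases hmem with h | h
      · exact hAD.ne_of_mem hi h rfl
      · exact hACdis.ne_of_mem hi h rfl
  have hnotC : ∀ i, i ∉ C → i ∈ D ∪ A := by
    intro i hi
    by_cases hd : i ∈ D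
    · exact Or.inl hd
    · rcases (hACun ▸ (hd : i ∈ Dᶜ) : i ∈ A ∪ C) with h | h
      · exact Or.inr h
      · exact absurd h hi
  have hDAnotC : ∀ i ∈ D ∪ A, i ∉ C := by
    rintro i (h | h) hc
    · exact hCD.ne_of_mem hc h rfl
    · exact hACdis.ne_of_mem h hc rfl
  -- the image family and its extension to a basis
  set s : Set V := σ '' (b '' (D ∪ A)) with hsdef
  have hs_eq_range : s = range (fun x : ↥(D ∪ A) => σ (b ↑x)) := by
    rw [hsdef, Set.image_image, Set.image_eq_range]
  have hs_li : LinearIndependent K (fun x : ↥s => (x : V)) := by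
    have h1 : LinearIndependent K (fun x : ↥(D ∪ A) => b ↑x) :=
      b.linearIndependent.comp _ Subtype.val_injective
    have h2 : LinearIndependent K (fun x : ↥(D ∪ A) => σ (b ↑x)) := by
      have := h1.map' (σ : V →ₗ[K] V) (LinearMap.ker_eq_bot.2 σ.injective)
      exact this
    have h3 := (linearIndepOn_id_range_iff h2.injective).2 h2
    rw [← hs_eq_range] at h3
    exact h3
  obtain ⟨bset, hbt, hsb, htspan, hbli⟩ :=
    exists_linearIndepOn_id_extension (s := s) hs_li (subset_union_left (t := range b))
  replace hbli : LinearIndependent K (fun x : ↥bset => (x : V)) := hbli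
  have hspan_top : span K bset = ⊤ := by
    refine le_antisymm le_top ?_
    rw [← b.span_eq]
    exact span_le.2 (fun x hx => htspan (Or.inr hx))
  set S : Set ι := {i | b i ∈ bset \ s} with hSdef
  have hbS : b '' S = bset \ s := by
    apply Subset.antisymm
    · rintro _ ⟨i, hi, rfl⟩
      exact hi
    · intro x hx
      rcases hbt hx.1 with h | ⟨i, rfl⟩
      · exact absurd h hx.2
      · exact ⟨i, hx, rfl⟩
  have hSD : Disjoint S D := by
    rw [Set.disjoint_left]
    intro i hi hD2
    have h1 : b i ∈ s := ⟨b i, ⟨i, Or.inl hD2, rfl⟩, hσ i hD2⟩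
    exact hi.2 h1
  -- span s = σ (span b''(D∪A))
  have hspan_s : (span K (b '' (D ∪ A))).map (σ : V →ₗ[K] V) = span K s := by
    rw [Submodule.map_span, hsdef]
    congr 1
  -- IsCompl (span s) (span b''S)
  have hdisjsS : Disjoint (span K s) (span K (b '' S)) := by
    rw [hbS]
    have h1 : Subtype.val '' (Subtype.val ⁻¹' s : Set ↥bset) = s :=
      Set.image_preimage_eq_of_subset (by rw [Subtype.range_coe]; exact hsb)
    have h2 : Subtype.val '' ((Subtype.val ⁻¹' s : Set ↥bset)ᶜ) = bset \ s := by
      apply Subset.antisymm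
      · rintro _ ⟨x, hx, rfl⟩
        exact ⟨x.2, hx⟩
      · rintro x ⟨h1', h2'⟩
        exact ⟨⟨x, h1'⟩, h2', rfl⟩
    have := hbli.disjoint_span_image
        (s := (Subtype.val ⁻¹' s : Set ↥bset)) (t := (Subtype.val ⁻¹' s : Set ↥bset)ᶜ)
        disjoint_compl_right
    rwa [h1, h2] at this
  have hcomplsS : IsCompl (span K s) (span K (b '' S)) := by
    constructor
    · exact hdisjsS
    · rw [codisjoint_iff, ← span_union, hbS, Set.union_diff_cancel hsb, hspan_top]
  -- cardinality of S
  have hSκ : #↥S = #ι := by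
    have e2 : (V ⧸ (span K s)) ≃ₗ[K] ↥(span K (b '' S)) :=
      Submodule.quotientEquivOfIsCompl _ _ hcomplsS
    have e3 : (V ⧸ (span K (b '' (D ∪ A)))) ≃ₗ[K] (V ⧸ (span K s)) :=
      Submodule.Quotient.equiv _ _ σ hspan_s
    have e4 : (V ⧸ (span K (b '' (D ∪ A)))) ≃ₗ[K] ↥(span K (b '' (D ∪ A)ᶜ)) :=
      Submodule.quotientEquivOfIsCompl _ _ (isCompl_span b (D ∪ A))
    have erank : Module.rank K ↥(span K (b '' S)) =
        Module.rank K ↥(span K (b '' (D ∪ A)ᶜ)) := by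
      rw [← e2.rank_eq, ← e3.rank_eq, e4.rank_eq]
    have := (mk_span_image b S).symm.trans
      ((congrArg Cardinal.lift erank).trans (mk_span_image b (D ∪ A)ᶜ))
    rw [Cardinal.lift_inj] at this
    rw [this, hDAc, hCκ]
  -- cardinality of the rest
  have hScκ : #↥(Sᶜ) = #ι := by
    have e2 : (V ⧸ (span K (b '' S))) ≃ₗ[K] ↥(span K (b '' Sᶜ)) :=
      Submodule.quotientEquivOfIsCompl _ _ (isCompl_span b S)
    have e3 : (V ⧸ (span K (b '' S))) ≃ₗ[K] ↥(span K s) :=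
      Submodule.quotientEquivOfIsCompl _ _ hcomplsS.symm
    have e4 : ↥(span K (b '' (D ∪ A))) ≃ₗ[K] ↥(span K s) := by
      rw [← hspan_s]
      exact Submodule.equivMapOfInjective (σ : V →ₗ[K] V) σ.injective _
    have e6 : #↥(D ∪ A) = #ι := by
      refine le_antisymm (mk_set_le _) ?_
      rw [← hAκ]
      exact mk_le_mk_of_subset subset_union_right
    have erank : Module.rank K ↥(span K (b '' Sᶜ)) =
        Module.rank K ↥(span K (b '' (D ∪ A))) := by
      rw [← e2.rank_eq, e3.rank_eq, ← e4.rank_eq]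
    have := (mk_span_image b Sᶜ).symm.trans
      ((congrArg Cardinal.lift erank).trans (mk_span_image b (D ∪ A)))
    rw [Cardinal.lift_inj] at this
    rw [this, e6]
  set rest : Set ι := Sᶜ \ D with hrestdef
  have hrestκ : #↥rest = #ι := mk_diff_eq hinf hScκ hD
  -- the bijections
  obtain ⟨φ⟩ := Cardinal.eq.1 (hCκ.trans hSκ.symm)
  obtain ⟨ψ⟩ := Cardinal.eq.1 (hAκ.trans hrestκ.symm)
  -- the new basis  `f`
  set f : ι → V := fun i => if h : i ∈ C then b ↑(φ ⟨i, h⟩) else σ (b i) with hfdef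
  have hfC : ∀ i (h : i ∈ C), f i = b ↑(φ ⟨i, h⟩) := fun i h => dif_pos h
  have hfnC : ∀ i, i ∉ C → f i = σ (b i) := fun i h => dif_neg h
  have hfsmem : ∀ i, i ∉ C → f i ∈ s := fun i h => by
    rw [hfnC i h]; exact ⟨b i, ⟨i, hnotC i h, rfl⟩, rfl⟩
  have hfSmem : ∀ i (h : i ∈ C), f i ∈ bset \ s := fun i h => by
    rw [hfC i h]; exact hbS ▸ Set.mem_image_of_mem b (φ ⟨i, h⟩).2
  have hfmem : ∀ i, f i ∈ bset := by
    intro i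
    by_cases h : i ∈ C
    · exact (hfSmem i h).1
    · exact hsb (hfsmem i h)
  have hfinj : Function.Injective f := by
    intro i j hij
    by_cases hi : i ∈ C <;> by_cases hj : j ∈ C
    · rw [hfC i hi, hfC j hj] at hij
      exact congrArg Subtype.val (φ.injective (Subtype.ext (b.injective hij)))
    · exact absurd (hfsmem j hj) (hij ▸ (hfSmem i hi).2)
    · exact absurd (hfsmem i hi) (hij ▸ (hfSmem j hj).2)
    · rw [hfnC i hi, hfnC j hj] at hij
      exact b.injective (σ.injective hij)
  have hfsurj : ∀ x : ↥bset, ∃ i, f i = ↑x := by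
    intro x
    by_cases hx : (x : V) ∈ s
    · obtain ⟨_, ⟨i, hiDA, rfl⟩, hval⟩ := hx
      exact ⟨i, by rw [hfnC i (hDAnotC i hiDA)]; exact hval⟩
    · have hxd : (x : V) ∈ bset \ s := ⟨x.2, hx⟩
      rw [← hbS] at hxd
      obtain ⟨j, hjS, hval⟩ := hxd
      refine ⟨↑(φ.symm ⟨j, hjS⟩), ?_⟩
      rw [hfC _ (φ.symm ⟨j, hjS⟩).2, Subtype.coe_eta, Equiv.apply_symm_apply]
      exact hval
  set femb : ι → ↥bset := fun i => ⟨f i, hfmem i⟩ with hfembdef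
  have hfembbij : Function.Bijective femb := by
    constructor
    · intro i j hij
      exact hfinj (congrArg Subtype.val hij)
    · intro x
      obtain ⟨i, hi⟩ := hfsurj x
      exact ⟨i, Subtype.ext hi⟩
  set e : ι ≃ ↥bset := Equiv.ofBijective femb hfembbij with hedef
  have heapp : ∀ i, ((e i : ↥bset) : V) = f i := fun i => rfl
  set bsetB : Module.Basis ↥bset K V := Module.Basis.mk hbli
    (by rw [Subtype.range_coe, hspan_top]) with hbsetB
  set bnew : Module.Basis ι K V := bsetB.reindex e.symm with hbnewdef
  have hbnew : ∀ i, bnew i = f i := by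
    intro i
    rw [hbnewdef, Module.Basis.reindex_apply, Equiv.symm_symm, hbsetB, Module.Basis.mk_apply]
    exact heapp i
  -- σ₁ and σ₂
  set σ₁ : V ≃ₗ[K] V := b.equiv bnew (Equiv.refl ι) with hσ₁def
  have hσ₁app : ∀ i, σ₁ (b i) = f i := by
    intro i
    rw [hσ₁def, b.equiv_apply, Equiv.refl_apply, hbnew]
  set σ₂ : V ≃ₗ[K] V := σ₁⁻¹ * σ with hσ₂def
  have hσ₂fix : ∀ i ∉ C, σ₂ (b i) = b i := by
    intro i hi
    show σ₁.symm (σ (b i)) = b i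
    rw [← hfnC i hi, ← hσ₁app i, σ₁.symm_apply_apply]
  have hσ₂mem : σ₂ ∈ Subgroup.closure (genSet b D) :=
    mem_closure_of_fix_compl b D hinf C hCD hCκ
      (by rw [union_comm, hDCc]; exact hAκ) σ₂ hσ₂fix
  -- the permutation
  set p : ι → ι := fun i => if h : i ∈ C then ↑(φ ⟨i, h⟩) else
    if h : i ∈ A then ↑(ψ ⟨i, h⟩) else i with hpdef
  have hpC : ∀ i (h : i ∈ C), p i = ↑(φ ⟨i, h⟩) := fun i h => dif_pos h
  have hpA : ∀ i (h : i ∈ A), p i = ↑(ψ ⟨i, h⟩) := by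
    intro i h
    rw [hpdef]
    simp only
    rw [dif_neg (fun hc => (hACdis.ne_of_mem h hc) rfl), dif_pos h]
  have hpD : ∀ i ∈ D, p i = i := by
    intro i h
    rw [hpdef]
    simp only
    rw [dif_neg (fun hc => (hCD.ne_of_mem hc h) rfl),
      dif_neg (fun ha => (hAD.ne_of_mem ha h) rfl)]
  have hrest : ∀ x : ↥A, (↑(ψ x) : ι) ∈ Sᶜ \ D := fun x => (ψ x).2
  have hSmem : ∀ x : ↥C, (↑(φ x) : ι) ∈ S := fun x => (φ x).2
  have hpbij : Function.Bijective p := by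
    constructor
    · intro i j hij
      by_cases hi : i ∈ C <;> by_cases hj : j ∈ C
      · rw [hpC i hi, hpC j hj] at hij
        exact congrArg Subtype.val (φ.injective (Subtype.ext hij))
      · exfalso
        rw [hpC i hi] at hij
        by_cases hj2 : j ∈ A
        · rw [hpA j hj2] at hij
          exact (hrest ⟨j, hj2⟩).1 (hij ▸ hSmem ⟨i, hi⟩)
        · have hjD : j ∈ D := by
            rcases hnotC j hj with h | h
            · exact h
            · exact absurd h hj2
          rw [hpD j hjD] at hij
          exact (hSD.ne_of_mem (hij ▸ hSmem ⟨i, hi⟩) hjD) rfl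
      · exfalso
        rw [hpC j hj] at hij
        by_cases hi2 : i ∈ A
        · rw [hpA i hi2] at hij
          exact (hrest ⟨i, hi2⟩).1 (hij ▸ hSmem ⟨j, hj⟩)
        · have hiD : i ∈ D := by
            rcases hnotC i hi with h | h
            · exact h
            · exact absurd h hi2
          rw [hpD i hiD] at hij
          exact (hSD.ne_of_mem (hij.symm ▸ hSmem ⟨j, hj⟩) hiD) rfl
      · by_cases hi2 : i ∈ A <;> by_cases hj2 : j ∈ A
        · rw [hpA i hi2, hpA j hj2] at hij
          exact congrArg Subtype.val (ψ.injective (Subtype.ext hij))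
        · exfalso
          have hjD : j ∈ D := by
            rcases hnotC j hj with h | h
            · exact h
            · exact absurd h hj2
          rw [hpA i hi2, hpD j hjD] at hij
          exact (hrest ⟨i, hi2⟩).2 (hij ▸ hjD)
        · exfalso
          have hiD : i ∈ D := by
            rcases hnotC i hi with h | h
            · exact h
            · exact absurd h hi2
          rw [hpD i hiD, hpA j hj2] at hij
          exact (hrest ⟨j, hj2⟩).2 (hij ▸ hiD)
        · have hiD : i ∈ D := by
            rcases hnotC i hi with h | h
            · exact h
            · exact absurd h hi2
          have hjD : j ∈ D := by
            rcases hnotC j hj with h | h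
            · exact h
            · exact absurd h hj2
          rw [hpD i hiD, hpD j hjD] at hij
          exact hij
    · intro j
      by_cases hj : j ∈ S
      · refine ⟨↑(φ.symm ⟨j, hj⟩), ?_⟩
        rw [hpC _ (φ.symm ⟨j, hj⟩).2, Subtype.coe_eta, Equiv.apply_symm_apply]
      · by_cases hj2 : j ∈ Sᶜ \ D
        · refine ⟨↑(ψ.symm ⟨j, hj2⟩), ?_⟩
          have hmem := (ψ.symm ⟨j, hj2⟩).2
          have hnC : (↑(ψ.symm ⟨j, hj2⟩) : ι) ∉ C :=
            fun hc => (hACdis.ne_of_mem hmem hc) rfl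
          rw [hpdef]
          simp only
          rw [dif_neg hnC, dif_pos hmem, Subtype.coe_eta, Equiv.apply_symm_apply]
        · have hjD : j ∈ D := by
            by_contra hD2
            exact hj2 ⟨hj, hD2⟩
          exact ⟨j, hpD j hjD⟩
  set π : Equiv.Perm ι := Equiv.ofBijective p hpbij with hπdef
  have hπapp : ∀ i, π i = p i := fun i => rfl
  have hπD : ∀ i ∈ D, π i = i := fun i hi => (hπapp i).trans (hpD i hi)
  set τ₁ : V ≃ₗ[K] V := b.equiv b π with hτ₁def
  have hτ₁app : ∀ i, τ₁ (b i) = b (p i) := fun i => b.equiv_apply i b π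
  have hτ₁mem : τ₁ ∈ Subgroup.closure (genSet b D) :=
    perm_mem_closure b D hinf π hπD
  set τ₂ : V ≃ₗ[K] V := τ₁⁻¹ * σ₁ with hτ₂def
  have hτ₂fix : ∀ i ∉ A, τ₂ (b i) = b i := by
    intro i hi
    show τ₁.symm (σ₁ (b i)) = b i
    by_cases hc : i ∈ C
    · rw [hσ₁app i, hfC i hc, ← hpC i hc, ← hτ₁app i, τ₁.symm_apply_apply]
    · have hiD : i ∈ D := by
        rcases hnotC i hc with h | h
        · exact h
        · exact absurd h hi
      rw [hσ₁app i, hfnC i hc, hσ i hiD]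
      rw [LinearEquiv.symm_apply_eq, hτ₁app i, hpD i hiD]
  have hτ₂mem : τ₂ ∈ Subgroup.closure (genSet b D) :=
    mem_closure_of_fix_compl b D hinf A hAD hAκ
      (by rw [union_comm, hDAc]; exact hCκ) τ₂ hτ₂fix
  have hfact : σ = τ₁ * (τ₂ * σ₂) := by
    rw [hτ₂def, hσ₂def]
    group
  rw [hfact]
  exact mul_mem hτ₁mem (mul_mem hτ₂mem hσ₂mem)

end Main

end Stmt16Aux



/-- Let `V` be a vector space of infinite dimension `κ = |ι|` over a division ring, with
basis `b`, and `D ⊆ ι` with `|D| < κ`. Then the pointwise stabilizer of `D` in `GL(V)` is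
generated by the `B`-moietous automorphisms fixing `D` pointwise. -/
theorem stmt_16 {K V ι : Type*} [DivisionRing K] [AddCommGroup V] [Module K V]
    (b : Module.Basis ι K V) (hinf : Cardinal.aleph0 ≤ Cardinal.mk ι)
    (D : Set ι) (hD : Cardinal.mk D < Cardinal.mk ι) :
    {σ : V ≃ₗ[K] V | ∀ i ∈ D, σ (b i) = b i} =
      ↑(Subgroup.closure {σ : V ≃ₗ[K] V | (∀ i ∈ D, σ (b i) = b i) ∧
        ∃ B₁ : Set ι, Cardinal.mk B₁ = Cardinal.mk ↥(B₁ᶜ) ∧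
          (∀ i ∈ B₁, σ (b i) = b i) ∧
          (Submodule.span K (b '' B₁ᶜ)).map (σ : V →ₗ[K] V) =
            Submodule.span K (b '' B₁ᶜ)}) := by
  
  ext σ
  simp only [Set.mem_setOf_eq, SetLike.mem_coe]
  constructor
  · intro hσ
    exact Stmt16Aux.main_mem_closure b D hinf hD σ hσ
  · intro hσ
    let G : Subgroup (V ≃ₗ[K] V) :=
      { carrier := {σ : V ≃ₗ[K] V | ∀ i ∈ D, σ (b i) = b i}
        mul_mem' := fun {x y} hx hy i hi => by
          show x (y (b i)) = b i
          rw [hy i hi, hx i hi]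
        one_mem' := fun i hi => rfl
        inv_mem' := fun {x} hx i hi => by
          show x.symm (b i) = b i
          rw [LinearEquiv.symm_apply_eq, hx i hi] }
    exact (Subgroup.closure_le G).2 (fun g hg => hg.1) hσ
end
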